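/- arXiv:1308.2115 — 7 statements merged into one kernel-verified Lean document; each statement's English description precedes it below -/
import Mathlib

section
/- For all n ≥ 0 and integers r ≥ 0, k, the addition formula A_n^{(r,k)}(x+y) = Σ_{j=0}^n (-1)^{n-j} · C(n,j) · A_j^{(r,k)}(x) · y^{(n-j)} holds, where y^{(m)} = y(y+1)⋯(y+m-1) is the rising factorial. -/
open PowerSeries Polynomial Finset

/-- descPochhammer smeval over ℚ equals eval. -/
lemma descPoch_smeval_eq_eval (n : ℕ) (x : ℚ) :
    (descPochhammer ℤ n).smeval x = (descPochhammer ℚ n).eval x := by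
  induction n with
  | zero => simp [descPochhammer_zero, Polynomial.smeval_one]
  | succ n ih =>
      rw [descPochhammer_succ_right, descPochhammer_succ_right, Polynomial.smeval_mul,
        Polynomial.eval_mul, ih]
      congr 1
      simp [Polynomial.smeval_sub, Polynomial.smeval_X, Polynomial.smeval_natCast]

/-- Chu–Vandermonde identity for ascPochhammer over ℚ. -/
lemma ascPoch_add (n : ℕ) (x y : ℚ) :
    (ascPochhammer ℚ n).eval (x + y) =
      ∑ j ∈ Finset.range (n + 1),
        (n.choose j : ℚ) * (ascPochhammer ℚ j).eval x * (ascPochhammer ℚ (n - j)).eval y := by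
  have h := Ring.descPochhammer_smeval_add (R := ℚ) (r := -x) (s := -y) n (Commute.all _ _)
  simp only [descPoch_smeval_eq_eval] at h
  have hmain : (ascPochhammer ℚ n).eval (x + y) =
      (-1) ^ n * (descPochhammer ℚ n).eval (-x + -y) := by
    have := ascPochhammer_eval_neg_eq_descPochhammer (R := ℚ) (-x + -y) n
    rw [show -(-x + -y) = x + y by ring] at this
    rw [this]
  rw [hmain, h, Finset.Nat.sum_antidiagonal_eq_sum_range_succ_mk, Finset.mul_sum]
  refine Finset.sum_congr rfl fun j hj => ?_
  have hjn : j ≤ n := Nat.lt_succ_iff.mp (Finset.mem_range.mp hj)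
  have hx : (ascPochhammer ℚ j).eval x = (-1 : ℚ) ^ j * (descPochhammer ℚ j).eval (-x) := by
    have := ascPochhammer_eval_neg_eq_descPochhammer (R := ℚ) (-x) j
    rwa [neg_neg] at this
  have hy : (ascPochhammer ℚ (n - j)).eval y =
      (-1 : ℚ) ^ (n - j) * (descPochhammer ℚ (n - j)).eval (-y) := by
    have := ascPochhammer_eval_neg_eq_descPochhammer (R := ℚ) (-y) (n - j)
    rwa [neg_neg] at this
  rw [hx, hy]
  have hsgn : (-1 : ℚ) ^ j * (-1 : ℚ) ^ (n - j) = (-1 : ℚ) ^ n := by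
    rw [← pow_add, Nat.add_sub_cancel' hjn]
  rw [← hsgn]
  ring

/-- addition formula
`Aₙ^{(r,k)}(x+y) = Σ_{j=0}^n (-1)^{n-j} C(n,j) A_j^{(r,k)}(x) y^{(n-j)}`,
for all `n ≥ 0` and integers `r ≥ 0`, `k` (stated via evaluation at all rationals,
which over ℚ is equivalent to the polynomial identity in two variables). -/
theorem cauchy_stmt4
    (r : ℕ) (k : ℤ)
    (L : PowerSeries ℚ)
    (hL : ∀ n : ℕ, PowerSeries.coeff n L = if n = 0 then 0 else (-1 : ℚ) ^ (n - 1) / n)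
    (Lu : (PowerSeries ℚ)ˣ)
    (hLu : (Lu : PowerSeries ℚ) * PowerSeries.X = L)
    (G : ℤ → PowerSeries ℚ)
    (hG : ∀ (j : ℤ) (n : ℕ), PowerSeries.coeff n (G j) =
      ∑ m ∈ Finset.range (n + 1),
        ((m.factorial : ℚ) * ((m : ℚ) + 1) ^ j)⁻¹ * PowerSeries.coeff n (L ^ m))
    (A : ℤ → ℤ → ℕ → Polynomial ℚ)
    (hA : ∀ ρ κ : ℤ, PowerSeries.map (Polynomial.C : ℚ →+* Polynomial ℚ)
        (((Lu ^ (-ρ) : (PowerSeries ℚ)ˣ) : PowerSeries ℚ) * G κ) *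
        PowerSeries.mk (fun n => ((-1 : ℚ) ^ n / n.factorial) • ascPochhammer ℚ n) =
      PowerSeries.mk (fun n => ((n.factorial : ℚ)⁻¹) • A ρ κ n))
    :
    ∀ (n : ℕ) (x y : ℚ), (A (r : ℤ) k n).eval (x + y) =
      ∑ j ∈ Finset.range (n + 1),
        (-1 : ℚ) ^ (n - j) * (n.choose j : ℚ) * (A (r : ℤ) k j).eval x *
          (ascPochhammer ℚ (n - j)).eval y := by
  intro n x y
  classical
  set U : PowerSeries ℚ := ((Lu ^ (-(r : ℤ)) : (PowerSeries ℚ)ˣ) : PowerSeries ℚ) * G k with hU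
  set P : PowerSeries (Polynomial ℚ) :=
    PowerSeries.mk (fun n => ((-1 : ℚ) ^ n / n.factorial) • ascPochhammer ℚ n) with hP
  have H := hA (r : ℤ) k
  rw [← hU] at H
  -- evaluation of the constant-coefficient series
  have hΦU : ∀ z : ℚ, PowerSeries.map (Polynomial.evalRingHom z)
      (PowerSeries.map (Polynomial.C : ℚ →+* Polynomial ℚ) U) = U := by
    intro z
    ext m
    simp [PowerSeries.coeff_map]
  have e : ∀ z : ℚ, PowerSeries.map (Polynomial.evalRingHom z)
      (PowerSeries.map (Polynomial.C : ℚ →+* Polynomial ℚ) U * P) =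
      U * PowerSeries.map (Polynomial.evalRingHom z) P := by
    intro z
    rw [map_mul, hΦU z]
  -- coefficients of evaluated P
  have hPc : ∀ (z : ℚ) (m : ℕ), PowerSeries.coeff m
      (PowerSeries.map (Polynomial.evalRingHom z) P) =
      (-1 : ℚ) ^ m / m.factorial * (ascPochhammer ℚ m).eval z := by
    intro z m
    simp [hP, PowerSeries.coeff_map, Polynomial.smul_eq_C_mul]
  -- multiplicativity in the exponent variable
  have hkey : PowerSeries.map (Polynomial.evalRingHom (x + y)) P =
      PowerSeries.map (Polynomial.evalRingHom x) P *
      PowerSeries.map (Polynomial.evalRingHom y) P := by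
    ext m
    rw [PowerSeries.coeff_mul, Finset.Nat.sum_antidiagonal_eq_sum_range_succ_mk, hPc,
      ascPoch_add, Finset.mul_sum]
    refine Finset.sum_congr rfl fun j hj => ?_
    have hjm : j ≤ m := Nat.lt_succ_iff.mp (Finset.mem_range.mp hj)
    rw [hPc, hPc]
    have hfac : (m.choose j : ℚ) * (j.factorial : ℚ) * ((m - j).factorial : ℚ) =
        (m.factorial : ℚ) := by
      exact_mod_cast congrArg (Nat.cast : ℕ → ℚ)
        (Nat.choose_mul_factorial_mul_factorial hjm)
    have hsign : (-1 : ℚ) ^ j * (-1 : ℚ) ^ (m - j) = (-1 : ℚ) ^ m := by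
      rw [← pow_add, Nat.add_sub_cancel' hjm]
    have h1 : (j.factorial : ℚ) ≠ 0 := Nat.cast_ne_zero.mpr j.factorial_ne_zero
    have h2 : ((m - j).factorial : ℚ) ≠ 0 := Nat.cast_ne_zero.mpr (m - j).factorial_ne_zero
    have h3 : (m.factorial : ℚ) ≠ 0 := Nat.cast_ne_zero.mpr m.factorial_ne_zero
    field_simp
    rw [← hsign, ← hfac]
    ring
  -- main generating-function identity
  have hmain : PowerSeries.map (Polynomial.evalRingHom (x + y))
        (PowerSeries.mk (fun n => ((n.factorial : ℚ)⁻¹) • A (r : ℤ) k n)) =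
      PowerSeries.map (Polynomial.evalRingHom x)
        (PowerSeries.mk (fun n => ((n.factorial : ℚ)⁻¹) • A (r : ℤ) k n)) *
      PowerSeries.map (Polynomial.evalRingHom y) P := by
    rw [← H, e (x + y), hkey, ← mul_assoc, ← e x, H]
  -- extract coefficient n
  have hcoeff := congrArg (PowerSeries.coeff n) hmain
  rw [PowerSeries.coeff_mul, Finset.Nat.sum_antidiagonal_eq_sum_range_succ_mk] at hcoeff
  simp only [PowerSeries.coeff_map, PowerSeries.coeff_mk, Polynomial.smul_eq_C_mul,
    Polynomial.coe_evalRingHom, Polynomial.eval_mul, Polynomial.eval_C, hPc] at hcoeff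
  have h3 : (n.factorial : ℚ) ≠ 0 := Nat.cast_ne_zero.mpr n.factorial_ne_zero
  rw [show (A (r : ℤ) k n).eval (x + y) =
      (n.factorial : ℚ) * ((n.factorial : ℚ)⁻¹ * (A (r : ℤ) k n).eval (x + y)) by
        field_simp, hcoeff, Finset.mul_sum]
  refine Finset.sum_congr rfl fun j hj => ?_
  have hjn : j ≤ n := Nat.lt_succ_iff.mp (Finset.mem_range.mp hj)
  have hfac : (n.choose j : ℚ) * (j.factorial : ℚ) * ((n - j).factorial : ℚ) =
      (n.factorial : ℚ) := by
    exact_mod_cast congrArg (Nat.cast : ℕ → ℚ)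
      (Nat.choose_mul_factorial_mul_factorial hjn)
  have h1 : (j.factorial : ℚ) ≠ 0 := Nat.cast_ne_zero.mpr j.factorial_ne_zero
  have h2 : ((n - j).factorial : ℚ) ≠ 0 := Nat.cast_ne_zero.mpr (n - j).factorial_ne_zero
  field_simp
  rw [← hfac]
  ring
end

section
/- For all n ≥ 1 and integers r ≥ 0, k, one has n · A_{n-1}^{(r,k)}(x) = A_n^{(r,k)}(x-1) - A_n^{(r,k)}(x) as polynomials in x. -/
open Polynomial in
lemma asc_comp (n : ℕ) : (ascPochhammer ℚ (n+1)).comp (X - 1) = (X - 1) * ascPochhammer ℚ n := by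
  rw [ascPochhammer_succ_left, Polynomial.mul_comp, Polynomial.X_comp, Polynomial.comp_assoc]
  simp

open Polynomial in
lemma c_comp (n : ℕ) :
    ((((-1:ℚ)^(n+1) / (n+1).factorial) • ascPochhammer ℚ (n+1)).comp (X - 1)) =
      ((-1:ℚ)^(n+1) / (n+1).factorial) • ascPochhammer ℚ (n+1)
        + ((-1:ℚ)^n / n.factorial) • ascPochhammer ℚ n := by
  have hfac : (((n+1).factorial : ℚ)) = (n+1) * n.factorial := by
    push_cast [Nat.factorial_succ]; ring
  have hb : ((-1:ℚ)^n / n.factorial) = ((-1:ℚ)^(n+1)/(n+1).factorial) * (-((n:ℚ)+1)) := by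
    have h1 : (n.factorial : ℚ) ≠ 0 := by exact_mod_cast n.factorial_ne_zero
    have h2 : ((n:ℚ)+1) ≠ 0 := by positivity
    rw [hfac]; field_simp; ring
  rw [Polynomial.smul_comp, asc_comp]
  rw [ascPochhammer_succ_right]
  rw [hb, Polynomial.smul_eq_C_mul, Polynomial.smul_eq_C_mul, Polynomial.smul_eq_C_mul,
    map_mul, map_neg, map_add, map_one, Polynomial.C_eq_natCast]
  ring


/-- for all `n ≥ 1` and integers `r ≥ 0`, `k`,
`n · A_{n-1}^{(r,k)}(x) = Aₙ^{(r,k)}(x-1) - Aₙ^{(r,k)}(x)` as polynomials in `x`. -/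

theorem cauchy_stmt5
    (r : ℕ) (k : ℤ)
    (L : PowerSeries ℚ)
    (hL : ∀ n : ℕ, PowerSeries.coeff n L = if n = 0 then 0 else (-1 : ℚ) ^ (n - 1) / n)
    (Lu : (PowerSeries ℚ)ˣ)
    (hLu : (Lu : PowerSeries ℚ) * PowerSeries.X = L)
    (G : ℤ → PowerSeries ℚ)
    (hG : ∀ (j : ℤ) (n : ℕ), PowerSeries.coeff n (G j) =
      ∑ m ∈ Finset.range (n + 1),
        ((m.factorial : ℚ) * ((m : ℚ) + 1) ^ j)⁻¹ * PowerSeries.coeff n (L ^ m))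
    (A : ℤ → ℤ → ℕ → Polynomial ℚ)
    (hA : ∀ ρ κ : ℤ, PowerSeries.map (Polynomial.C : ℚ →+* Polynomial ℚ)
        (((Lu ^ (-ρ) : (PowerSeries ℚ)ˣ) : PowerSeries ℚ) * G κ) *
        PowerSeries.mk (fun n => ((-1 : ℚ) ^ n / n.factorial) • ascPochhammer ℚ n) =
      PowerSeries.mk (fun n => ((n.factorial : ℚ)⁻¹) • A ρ κ n))
    :
    ∀ n : ℕ, 1 ≤ n →
      (n : ℚ) • A (r : ℤ) k (n - 1) =
        (A (r : ℤ) k n).comp (Polynomial.X - 1) - A (r : ℤ) k n := by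
  intro n hn
  obtain ⟨m, rfl⟩ : ∃ m, n = m + 1 := ⟨n - 1, (Nat.succ_pred_eq_of_pos hn).symm⟩
  classical
  set φa : Polynomial ℚ →ₐ[ℚ] Polynomial ℚ := Polynomial.aeval (Polynomial.X - 1) with hφa
  set φ : Polynomial ℚ →+* Polynomial ℚ := φa.toRingHom with hφ
  have hφapp : ∀ p : Polynomial ℚ, φ p = p.comp (Polynomial.X - 1) := by
    intro p
    simp [hφ, hφa, Polynomial.aeval_def, Polynomial.comp, Polynomial.algebraMap_eq]
  set F := PowerSeries.map (Polynomial.C : ℚ →+* Polynomial ℚ)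
      (((Lu ^ (-(r:ℤ)) : (PowerSeries ℚ)ˣ) : PowerSeries ℚ) * G k) with hF
  set M := PowerSeries.mk (fun n => ((-1 : ℚ) ^ n / n.factorial) • ascPochhammer ℚ n) with hM
  have key : F * M = PowerSeries.mk (fun n => ((n.factorial : ℚ)⁻¹) • A (r:ℤ) k n) := hA (r:ℤ) k
  have hFm : PowerSeries.map φ F = F := by
    have h1 : φ.comp Polynomial.C = Polynomial.C := by
      ext a; simp [hφ, hφa]
    rw [hF]
    conv_rhs => rw [← h1]
    rw [PowerSeries.map_comp]; rfl
  have hMm : PowerSeries.map φ M = M + PowerSeries.X * M := by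
    apply PowerSeries.ext; intro j
    rw [PowerSeries.coeff_map, map_add]
    cases j with
    | zero =>
      simp [hM, hφapp]
    | succ j =>
      rw [PowerSeries.coeff_succ_X_mul]
      simp only [hM, PowerSeries.coeff_mk]
      rw [hφapp]
      exact c_comp j
  have main : PowerSeries.mk (fun n => ((n.factorial : ℚ)⁻¹) • (A (r:ℤ) k n).comp (Polynomial.X - 1))
      = PowerSeries.mk (fun n => ((n.factorial:ℚ)⁻¹) • A (r:ℤ) k n)
        + PowerSeries.X * PowerSeries.mk (fun n => ((n.factorial:ℚ)⁻¹) • A (r:ℤ) k n) := by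
    have h2 : PowerSeries.mk (fun n => ((n.factorial : ℚ)⁻¹) • (A (r:ℤ) k n).comp (Polynomial.X - 1))
        = PowerSeries.map φ (PowerSeries.mk (fun n => ((n.factorial : ℚ)⁻¹) • A (r:ℤ) k n)) := by
      ext j
      rw [PowerSeries.coeff_map, PowerSeries.coeff_mk, PowerSeries.coeff_mk, hφapp,
        Polynomial.smul_comp]
    rw [h2, ← key, map_mul, hFm, hMm, mul_add, mul_left_comm, key]
  have E := congrArg (PowerSeries.coeff (R := Polynomial ℚ) (m+1)) main
  rw [map_add, PowerSeries.coeff_succ_X_mul, PowerSeries.coeff_mk, PowerSeries.coeff_mk,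
    PowerSeries.coeff_mk] at E
  have hfac1 : ((m+1).factorial : ℚ) ≠ 0 := by exact_mod_cast (m+1).factorial_ne_zero
  have hfac : (((m+1).factorial : ℚ)) = (m+1) * m.factorial := by
    push_cast [Nat.factorial_succ]; ring
  have hfm : (m.factorial : ℚ) ≠ 0 := by exact_mod_cast m.factorial_ne_zero
  have E2 := congrArg (fun p => ((m+1).factorial : ℚ) • p) E
  simp only [smul_add, smul_smul, mul_inv_cancel₀ hfac1, one_smul] at E2
  have h3 : ((m+1).factorial:ℚ) * (m.factorial:ℚ)⁻¹ = ((m:ℚ)+1) := by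
    rw [hfac]; field_simp
  rw [h3] at E2
  have hms : (m + 1 - 1 : ℕ) = m := rfl
  rw [hms]
  push_cast
  rw [E2]
  abel
end

section
/- For all n ≥ 0, r ≥ 0 and every integer k, A_n^{(r,k)}(x) = Σ_{j=0}^n [ Σ_{m=j}^n Σ_{l=0}^{m-j} (C(m,l)·C(m-l,j) / (C(m-l-j+r, r)·(l+1)^k)) · S₁(n,m) · S₂(m-l-j+r, r) ] · (-x)^j, where S₁ and S₂ are the Stirling numbers of the first and second kind respectively. -/
open PowerSeries Finset

lemma coeff_pow_zero_aux {R : Type*} [CommSemiring R] {φ : PowerSeries R}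
    (h : PowerSeries.constantCoeff φ = 0) :
    ∀ (m n : ℕ), n < m → PowerSeries.coeff n (φ ^ m) = 0 := by
  intro m
  induction m with
  | zero => intro n hn; omega
  | succ m ih =>
    intro n hn
    rw [pow_succ, mul_comm, PowerSeries.coeff_mul]
    apply Finset.sum_eq_zero
    rintro ⟨i, j⟩ hij
    rw [Finset.HasAntidiagonal.mem_antidiagonal] at hij
    rcases Nat.eq_zero_or_pos i with hi | hi
    · subst hi; simp [h]
    · have : j < m := by omega
      rw [ih j this, mul_zero]

lemma swap_tri {M : Type*} [AddCommMonoid M] (n : ℕ) (f : ℕ → ℕ → M) :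
    ∑ m ∈ Finset.range (n+1), ∑ j ∈ Finset.range (m+1), f m j
      = ∑ j ∈ Finset.range (n+1), ∑ m ∈ Finset.Icc j n, f m j := by
  apply Finset.sum_comm'
  intro m j
  simp only [Finset.mem_range, Finset.mem_Icc]
  omega

lemma regroup {R : Type*} [CommRing R] (n : ℕ) (h : ℕ → ℕ → R) (c : ℕ → R)
    (hc : ∀ m, n < m → c m = 0) :
    ∑ a ∈ Finset.range (n+1), ∑ b ∈ Finset.range (n+1), h a b * c (a+b)
      = ∑ m ∈ Finset.range (n+1),
          (∑ i ∈ Finset.range (m+1), h i (m-i)) * c m := by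
  have rhs : ∑ m ∈ Finset.range (n+1), (∑ i ∈ Finset.range (m+1), h i (m-i)) * c m
      = ∑ m ∈ Finset.range (n+1), ∑ i ∈ Finset.range (m+1), h i (m-i) * c (i + (m-i)) := by
    refine Finset.sum_congr rfl fun m _ => ?_
    rw [Finset.sum_mul]
    refine Finset.sum_congr rfl fun i hi => ?_
    rw [Finset.mem_range] at hi
    congr 2
    omega
  rw [rhs, swap_tri n (fun m i => h i (m-i) * c (i + (m-i)))]
  refine Finset.sum_congr rfl fun a ha => ?_
  rw [Finset.mem_range] at ha
  rw [show Finset.Icc a n = Finset.Ico a (n+1) from (Finset.Ico_add_one_right_eq_Icc a n),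
    Finset.sum_Ico_eq_sum_range]
  simp only [Nat.add_sub_cancel_left]
  refine Eq.symm (Finset.sum_subset ?_ ?_)
  · intro k hk
    rw [Finset.mem_range] at *
    omega
  · intro k hk1 hk2
    rw [Finset.mem_range] at *
    rw [hc (a+k) (by omega), mul_zero]

lemma coeff_mul_eta {R : Type*} [CommRing R] {F F' G G' : PowerSeries R} (n : ℕ)
    (hF : ∀ j ≤ n, PowerSeries.coeff j F = PowerSeries.coeff j F')
    (hG : ∀ j ≤ n, PowerSeries.coeff j G = PowerSeries.coeff j G') :
    PowerSeries.coeff n (F * G) = PowerSeries.coeff n (F' * G') := by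
  rw [PowerSeries.coeff_mul, PowerSeries.coeff_mul]
  refine Finset.sum_congr rfl ?_
  rintro ⟨i, j⟩ hij
  rw [Finset.HasAntidiagonal.mem_antidiagonal] at hij
  rw [hF i (by omega), hG j (by omega)]

lemma mul_rep {R : Type*} [CommRing R] (φ : PowerSeries R)
    (hφ : PowerSeries.constantCoeff φ = 0) (f g : ℕ → R) (F G : PowerSeries R)
    (hF : ∀ n, PowerSeries.coeff n F
      = ∑ m ∈ Finset.range (n+1), f m * PowerSeries.coeff n (φ ^ m))
    (hG : ∀ n, PowerSeries.coeff n G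
      = ∑ m ∈ Finset.range (n+1), g m * PowerSeries.coeff n (φ ^ m)) :
    ∀ n, PowerSeries.coeff n (F * G)
      = ∑ m ∈ Finset.range (n+1),
          (∑ i ∈ Finset.range (m+1), f i * g (m - i)) * PowerSeries.coeff n (φ ^ m) := by
  intro n
  set FN : PowerSeries R := ∑ m ∈ Finset.range (n+1), PowerSeries.C (f m) * φ ^ m with hFN
  set GN : PowerSeries R := ∑ m ∈ Finset.range (n+1), PowerSeries.C (g m) * φ ^ m with hGN
  have coeffN : ∀ (f : ℕ → R) (FF : PowerSeries R),
      (∀ n, PowerSeries.coeff n FF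
        = ∑ m ∈ Finset.range (n+1), f m * PowerSeries.coeff n (φ ^ m)) →
      ∀ j ≤ n, PowerSeries.coeff j FF
        = PowerSeries.coeff j (∑ m ∈ Finset.range (n+1), PowerSeries.C (f m) * φ ^ m) := by
    intro f FF hFF j hj
    rw [map_sum]
    have step : ∀ m ∈ Finset.range (n+1),
        PowerSeries.coeff j (PowerSeries.C (f m) * φ ^ m)
          = f m * PowerSeries.coeff j (φ ^ m) := fun m _ => by
      rw [PowerSeries.coeff_C_mul]
    rw [Finset.sum_congr rfl step, hFF]
    apply Finset.sum_subset (Finset.range_subset_range.2 (by omega : j + 1 ≤ n + 1))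
    intro m _ hm
    rw [Finset.mem_range, not_lt] at hm
    rw [coeff_pow_zero_aux hφ m j (by omega), mul_zero]
  have coeffFN : ∀ j ≤ n, PowerSeries.coeff j F = PowerSeries.coeff j FN :=
    coeffN f F hF
  have coeffGN : ∀ j ≤ n, PowerSeries.coeff j G = PowerSeries.coeff j GN :=
    coeffN g G hG
  rw [coeff_mul_eta n coeffFN coeffGN, hFN, hGN, Finset.sum_mul_sum]
  rw [map_sum]
  have expand : ∀ a ∈ Finset.range (n+1),
      PowerSeries.coeff n (∑ b ∈ Finset.range (n+1),
        (PowerSeries.C (f a) * φ ^ a) * (PowerSeries.C (g b) * φ ^ b))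
      = ∑ b ∈ Finset.range (n+1), f a * g b * PowerSeries.coeff n (φ ^ (a+b)) := by
    intro a _
    rw [map_sum]
    refine Finset.sum_congr rfl fun b _ => ?_
    rw [show (PowerSeries.C (f a) * φ ^ a) * (PowerSeries.C (g b) * φ ^ b)
        = PowerSeries.C (f a) * (PowerSeries.C (g b) * φ ^ (a+b)) by ring]
    rw [PowerSeries.coeff_C_mul, PowerSeries.coeff_C_mul]
    ring
  rw [Finset.sum_congr rfl expand]
  exact regroup n (fun a b => f a * g b) (fun m => PowerSeries.coeff n (φ ^ m))
    (fun m hm => coeff_pow_zero_aux hφ m n hm)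

section Lfacts
variable (L : PowerSeries ℚ)

noncomputable def cs1 (n l : ℕ) : ℚ := (descPochhammer ℚ n).coeff l

lemma L_const (hL : ∀ n : ℕ, PowerSeries.coeff n L = if n = 0 then 0 else (-1 : ℚ) ^ (n - 1) / n) : PowerSeries.constantCoeff L = 0 := by
  rw [← PowerSeries.coeff_zero_eq_constantCoeff_apply, hL]; simp

lemma L_deriv (hL : ∀ n : ℕ, PowerSeries.coeff n L = if n = 0 then 0 else (-1 : ℚ) ^ (n - 1) / n) : (1 + PowerSeries.X) * (PowerSeries.derivative ℚ L) = 1 := by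
  ext n
  rw [add_mul, one_mul, map_add]
  cases n with
  | zero =>
    rw [PowerSeries.coeff_zero_X_mul, PowerSeries.coeff_derivative, hL]
    simp
  | succ n =>
    rw [PowerSeries.coeff_succ_X_mul, PowerSeries.coeff_derivative,
      PowerSeries.coeff_derivative, hL, hL]
    simp only [Nat.succ_ne_zero, if_false, PowerSeries.coeff_one, Nat.succ_ne_zero, if_false]
    push_cast
    have h1 : ((n:ℚ)+1) ≠ 0 := by positivity
    have h2 : ((n:ℚ)+1+1) ≠ 0 := by positivity
    field_simp
    ring
end Lfacts

section CoeffL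
variable {L : PowerSeries ℚ}
  (hL : ∀ n : ℕ, PowerSeries.coeff n L = if n = 0 then 0 else (-1 : ℚ) ^ (n - 1) / n)

lemma cs1_succ_succ (n l : ℕ) : cs1 (n+1) (l+1) = cs1 n l - n * cs1 n (l+1) := by
  unfold cs1
  rw [descPochhammer_succ_right, mul_sub, Polynomial.coeff_sub, Polynomial.coeff_mul_X]
  have : ((n : ℕ) : Polynomial ℚ) = Polynomial.C (n : ℚ) := by simp
  rw [this, mul_comm _ (Polynomial.C _), Polynomial.coeff_C_mul]

lemma cs1_zero_zero : cs1 0 0 = 1 := by simp [cs1, descPochhammer]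

lemma cs1_zero_succ (l : ℕ) : cs1 0 (l + 1) = 0 := by
  simp [cs1, descPochhammer, Polynomial.coeff_one]

lemma cs1_succ_zero (n : ℕ) : cs1 (n+1) 0 = -(n:ℚ) * cs1 n 0 := by
  unfold cs1
  rw [descPochhammer_succ_right, mul_sub, Polynomial.coeff_sub]
  have : ((n : ℕ) : Polynomial ℚ) = Polynomial.C (n : ℚ) := by simp
  rw [this, mul_comm _ (Polynomial.C _), Polynomial.coeff_C_mul]
  simp [Polynomial.coeff_mul_X_zero]

lemma cs1_succ_zero' (n : ℕ) : cs1 (n+1) 0 = 0 := by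
  induction n with
  | zero => simp [cs1_succ_zero]
  | succ m ih => rw [cs1_succ_zero, ih, mul_zero]

include hL in
lemma cL : ∀ (n m : ℕ), PowerSeries.coeff n (L ^ m)
    = (m.factorial : ℚ) / (n.factorial : ℚ) * cs1 n m := by
  intro n
  induction n with
  | zero =>
    intro m
    rw [PowerSeries.coeff_zero_eq_constantCoeff_apply, map_pow, L_const L hL]
    cases m with
    | zero => simp [cs1_zero_zero]
    | succ m => simp [cs1_zero_succ]
  | succ n ih =>
    intro m
    cases m with
    | zero =>
      rw [pow_zero, cs1_succ_zero', PowerSeries.coeff_one]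
      simp
    | succ m =>
      -- derivative recurrence
      have hd : PowerSeries.derivative ℚ (L ^ (m+1))
          = (m+1) • (L ^ m * PowerSeries.derivative ℚ L) := by
        rw [Derivation.leibniz_pow]
        simp [smul_smul]
      have key : (1 + PowerSeries.X) * PowerSeries.derivative ℚ (L ^ (m+1))
          = (m+1) • (L ^ m) := by
        rw [hd, mul_smul_comm, show (1 + PowerSeries.X) * (L ^ m * PowerSeries.derivative ℚ L)
            = L ^ m * ((1 + PowerSeries.X) * PowerSeries.derivative ℚ L) by ring,
          L_deriv L hL, mul_one]
      have hcoeff := congrArg (PowerSeries.coeff n) key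
      rw [add_mul, one_mul, map_add, map_nsmul] at hcoeff
      have hXd : PowerSeries.coeff n (PowerSeries.X * PowerSeries.derivative ℚ (L^(m+1)))
          = (n : ℚ) * PowerSeries.coeff n (L^(m+1)) := by
        cases n with
        | zero => rw [PowerSeries.coeff_zero_X_mul]; simp
        | succ n' =>
          rw [PowerSeries.coeff_succ_X_mul, PowerSeries.coeff_derivative]
          push_cast; ring
      rw [hXd, PowerSeries.coeff_derivative] at hcoeff
      -- hcoeff : coeff (n+1) (L^(m+1)) * (n+1) + n * coeff n (L^(m+1)) = (m+1) • coeff n (L^m)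
      have hn1 : ((n:ℚ)+1) ≠ 0 := by positivity
      have : PowerSeries.coeff (n+1) (L^(m+1))
          = ((m+1 : ℚ) * PowerSeries.coeff n (L^m)
              - (n:ℚ) * PowerSeries.coeff n (L^(m+1))) / ((n:ℚ)+1) := by
        rw [eq_div_iff hn1]
        rw [nsmul_eq_mul] at hcoeff
        push_cast at hcoeff ⊢
        linarith [hcoeff]
      rw [this, ih m, ih (m+1), cs1_succ_succ]
      have hfn : ((n.factorial : ℚ)) ≠ 0 := by exact_mod_cast n.factorial_ne_zero
      rw [Nat.factorial_succ n, Nat.factorial_succ m]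
      push_cast
      field_simp
end CoeffL

lemma cs1_eq_zero {n l : ℕ} (h : n < l) : cs1 n l = 0 := by
  apply Polynomial.coeff_eq_zero_of_natDegree_lt
  rwa [descPochhammer_natDegree]

section S2
variable (S2 : ℕ → ℕ → ℕ)
  (hS200 : S2 0 0 = 1)
  (hS2n0 : ∀ n : ℕ, S2 (n + 1) 0 = 0)
  (hS20m : ∀ m : ℕ, S2 0 (m + 1) = 0)
  (hS2rec : ∀ n m : ℕ, S2 (n + 1) (m + 1) = (m + 1) * S2 n (m + 1) + S2 n m)

include hS20m hS2rec in
lemma S2_eq_zero : ∀ (a ρ : ℕ), a < ρ → S2 a ρ = 0 := by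
  intro a
  induction a with
  | zero => intro ρ hρ; cases ρ with
    | zero => omega
    | succ ρ => exact hS20m ρ
  | succ a ih =>
    intro ρ hρ
    cases ρ with
    | zero => omega
    | succ ρ =>
      rw [hS2rec a ρ, ih (ρ+1) (by omega), ih ρ (by omega)]
      ring

include hS200 hS2n0 hS20m hS2rec in
lemma orth : ∀ (n ρ : ℕ),
    ∑ a ∈ Finset.range (n+1), (S2 a ρ : ℚ) * cs1 n a = if n = ρ then 1 else 0 := by
  intro n
  induction n with
  | zero =>
    intro ρ
    rw [Finset.sum_range_one, cs1_zero_zero, mul_one]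
    cases ρ with
    | zero => simp [hS200]
    | succ ρ => simp [hS20m ρ]
  | succ n ih =>
    intro ρ
    rw [Finset.sum_range_succ']
    rw [cs1_succ_zero' n, mul_zero, add_zero]
    have expand : ∀ a ∈ Finset.range (n+1),
        (S2 (a+1) ρ : ℚ) * cs1 (n+1) (a+1)
          = (S2 (a+1) ρ : ℚ) * cs1 n a - (n:ℚ) * ((S2 (a+1) ρ : ℚ) * cs1 n (a+1)) := by
      intro a _
      rw [cs1_succ_succ]
      ring
    rw [Finset.sum_congr rfl expand, Finset.sum_sub_distrib, ← Finset.mul_sum]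
    have shift : ∑ a ∈ Finset.range (n+1), (S2 (a+1) ρ : ℚ) * cs1 n (a+1)
        = (if n = ρ then (1:ℚ) else 0) - (S2 0 ρ : ℚ) * cs1 n 0 := by
      have h1 := Finset.sum_range_succ' (fun a => (S2 a ρ : ℚ) * cs1 n a) (n+1)
      have h2 : ∑ a ∈ Finset.range (n+1+1), (S2 a ρ : ℚ) * cs1 n a
          = ∑ a ∈ Finset.range (n+1), (S2 a ρ : ℚ) * cs1 n a := by
        rw [Finset.sum_range_succ, cs1_eq_zero (by omega), mul_zero, add_zero]
      rw [h2, ih ρ] at h1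
      linarith [h1]
    rw [shift]
    cases ρ with
    | zero =>
      have hz : ∀ a ∈ Finset.range (n+1), (S2 (a+1) 0 : ℚ) * cs1 n a = 0 := by
        intro a _; rw [hS2n0 a]; simp
      rw [Finset.sum_congr rfl hz, Finset.sum_const_zero]
      cases n with
      | zero => simp [cs1_zero_zero]
      | succ n => simp [cs1_succ_zero']
    | succ ρ =>
      have hrec : ∀ a ∈ Finset.range (n+1), (S2 (a+1) (ρ+1) : ℚ) * cs1 n a
          = ((ρ:ℚ)+1) * ((S2 a (ρ+1) : ℚ) * cs1 n a) + (S2 a ρ : ℚ) * cs1 n a := by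
        intro a _
        rw [hS2rec a ρ]
        push_cast
        ring
      rw [Finset.sum_congr rfl hrec, Finset.sum_add_distrib, ← Finset.mul_sum, ih, ih,
        hS20m ρ]
      push_cast
      simp only [zero_mul, sub_zero]
      by_cases h1 : n = ρ + 1
      · subst h1
        simp
      · by_cases h2 : n = ρ
        · subst h2; simp [h1]
        · simp [h1, h2]
end S2

section RepD
variable (r : ℕ) (L : PowerSeries ℚ)
  (hL : ∀ n : ℕ, PowerSeries.coeff n L = if n = 0 then 0 else (-1 : ℚ) ^ (n - 1) / n)
  (Lu : (PowerSeries ℚ)ˣ)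
  (hLu : (Lu : PowerSeries ℚ) * PowerSeries.X = L)
  (S2 : ℕ → ℕ → ℕ)
  (hS200 : S2 0 0 = 1)
  (hS2n0 : ∀ n : ℕ, S2 (n + 1) 0 = 0)
  (hS20m : ∀ m : ℕ, S2 0 (m + 1) = 0)
  (hS2rec : ∀ n m : ℕ, S2 (n + 1) (m + 1) = (m + 1) * S2 n (m + 1) + S2 n m)

include hL hLu hS200 hS2n0 hS20m hS2rec in
lemma repD : ∀ n : ℕ, PowerSeries.coeff n ((Lu ^ (-(r:ℤ)) : (PowerSeries ℚ)ˣ) : PowerSeries ℚ)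
    = ∑ m ∈ Finset.range (n+1),
        ((r.factorial : ℚ) * (S2 (m+r) r : ℚ) / ((m+r).factorial : ℚ))
          * PowerSeries.coeff n (L ^ m) := by
  set e : ℕ → ℚ := fun s => (r.factorial : ℚ) * (S2 (s+r) r : ℚ) / ((s+r).factorial : ℚ)
    with he
  set N : PowerSeries ℚ := PowerSeries.mk fun n =>
    ∑ m ∈ Finset.range (n+1), e m * PowerSeries.coeff n (L ^ m) with hN
  have hFN : ∀ n, PowerSeries.coeff n N
      = ∑ m ∈ Finset.range (n+1), e m * PowerSeries.coeff n (L ^ m) := by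
    intro n; rw [hN, PowerSeries.coeff_mk]
  have hGN : ∀ n, PowerSeries.coeff n (L ^ r)
      = ∑ m ∈ Finset.range (n+1),
          (if m = r then (1:ℚ) else 0) * PowerSeries.coeff n (L ^ m) := by
    intro n
    have : ∀ m ∈ Finset.range (n+1),
        (if m = r then (1:ℚ) else 0) * PowerSeries.coeff n (L ^ m)
          = if m = r then PowerSeries.coeff n (L ^ m) else 0 := by
      intro m _; split <;> simp
    rw [Finset.sum_congr rfl this, Finset.sum_ite_eq' (Finset.range (n+1)) r
      (fun m => PowerSeries.coeff n (L ^ m))]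
    split
    · rfl
    · rename_i hr
      rw [Finset.mem_range, not_lt] at hr
      exact coeff_pow_zero_aux (L_const L hL) r n (by omega)
  have key := mul_rep L (L_const L hL) (fun m => if m = r then (1:ℚ) else 0) e
    (L ^ r) N hGN hFN
  have hprod : ∀ n, PowerSeries.coeff n (L ^ r * N)
      = if n = r then (1:ℚ) else 0 := by
    intro n
    rw [key n]
    have inner : ∀ m ∈ Finset.range (n+1),
        (∑ i ∈ Finset.range (m+1), (if i = r then (1:ℚ) else 0) * e (m - i))
          * PowerSeries.coeff n (L ^ m)
        = (r.factorial : ℚ) / (n.factorial : ℚ) * ((S2 m r : ℚ) * cs1 n m) := by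
      intro m _
      have step : ∀ i ∈ Finset.range (m+1),
          (if i = r then (1:ℚ) else 0) * e (m - i)
            = if i = r then e (m - i) else 0 := by
        intro i _; split <;> simp
      rw [Finset.sum_congr rfl step, Finset.sum_ite_eq' (Finset.range (m+1)) r
        (fun i => e (m - i)), cL hL]
      split
      · rename_i hr
        rw [Finset.mem_range] at hr
        rw [he]
        simp only []
        rw [show m - r + r = m by omega]
        field_simp
      · rename_i hr
        rw [Finset.mem_range, not_lt] at hr
        rw [S2_eq_zero S2 hS20m hS2rec m r (by omega)]
        simp
    rw [Finset.sum_congr rfl inner, ← Finset.mul_sum,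
      orth S2 hS200 hS2n0 hS20m hS2rec n r]
    by_cases h : n = r
    · subst h
      have : (n.factorial : ℚ) ≠ 0 := by exact_mod_cast n.factorial_ne_zero
      simp [this]
    · simp [h]
  have hX : L ^ r * N = PowerSeries.X ^ r := by
    ext n
    rw [hprod n, PowerSeries.coeff_X_pow]
  -- now identify N with the unit power
  have hLr : L ^ r = (Lu : PowerSeries ℚ) ^ r * PowerSeries.X ^ r := by
    rw [← hLu, mul_pow]
  have hD : L ^ r * ((Lu ^ (-(r:ℤ)) : (PowerSeries ℚ)ˣ) : PowerSeries ℚ)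
      = PowerSeries.X ^ r := by
    rw [hLr]
    have : (Lu : PowerSeries ℚ) ^ r * ((Lu ^ (-(r:ℤ)) : (PowerSeries ℚ)ˣ) : PowerSeries ℚ)
        = 1 := by
      rw [← Units.val_pow_eq_pow_val, ← Units.val_mul, ← zpow_natCast Lu r, ← zpow_add]
      simp
    calc (Lu : PowerSeries ℚ) ^ r * PowerSeries.X ^ r
          * ((Lu ^ (-(r:ℤ)) : (PowerSeries ℚ)ˣ) : PowerSeries ℚ)
        = ((Lu : PowerSeries ℚ) ^ r
            * ((Lu ^ (-(r:ℤ)) : (PowerSeries ℚ)ˣ) : PowerSeries ℚ)) * PowerSeries.X ^ r := by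
          ring
      _ = PowerSeries.X ^ r := by rw [this, one_mul]
  have hLne : L ^ r ≠ 0 := by
    apply pow_ne_zero
    intro h
    have := hL 1
    rw [h] at this
    simp at this
  have hNeq : N = ((Lu ^ (-(r:ℤ)) : (PowerSeries ℚ)ˣ) : PowerSeries ℚ) :=
    mul_left_cancel₀ hLne (hX.trans hD.symm)
  intro n
  rw [← hNeq, hFN]
end RepD

lemma pol_id (n : ℕ) :
    ∑ j ∈ Finset.range (n+1), cs1 n j • ((-Polynomial.X : Polynomial ℚ) ^ j)
      = ((-1:ℚ)^n) • ascPochhammer ℚ n := by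
  apply Polynomial.funext
  intro x
  rw [Polynomial.eval_finset_sum]
  simp only [Polynomial.eval_smul, Polynomial.eval_pow, Polynomial.eval_neg, Polynomial.eval_X,
    smul_eq_mul]
  have h := ascPochhammer_eval_neg_eq_descPochhammer (R := ℚ) (-x) n
  rw [neg_neg] at h
  have hdesc : (descPochhammer ℚ n).eval (-x)
      = ∑ i ∈ Finset.range (n+1), cs1 n i * (-x)^i := by
    rw [Polynomial.eval_eq_sum_range' (by rw [descPochhammer_natDegree]; omega : (descPochhammer ℚ n).natDegree < n+1)]
    rfl
  rw [← hdesc, h]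
  rw [show ((-1:ℚ)^n) * ((-1:ℚ)^n * Polynomial.eval (-x) (descPochhammer ℚ n))
      = ((-1:ℚ)^n * (-1:ℚ)^n) * Polynomial.eval (-x) (descPochhammer ℚ n) by ring,
    ← pow_add]
  simp [pow_mul]

section RepB
variable {L : PowerSeries ℚ}
  (hL : ∀ n : ℕ, PowerSeries.coeff n L = if n = 0 then 0 else (-1 : ℚ) ^ (n - 1) / n)

include hL in
lemma repB : ∀ n : ℕ,
    PowerSeries.coeff n
      (PowerSeries.mk (fun n => ((-1 : ℚ) ^ n / n.factorial) • ascPochhammer ℚ n))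
    = ∑ j ∈ Finset.range (n+1),
        (((j.factorial : ℚ))⁻¹ • (-Polynomial.X : Polynomial ℚ) ^ j)
          * PowerSeries.coeff n
              ((PowerSeries.map (Polynomial.C : ℚ →+* Polynomial ℚ) L) ^ j) := by
  intro n
  rw [PowerSeries.coeff_mk]
  have hcoeffmap : ∀ j : ℕ, PowerSeries.coeff n
      ((PowerSeries.map (Polynomial.C : ℚ →+* Polynomial ℚ) L) ^ j)
      = Polynomial.C (PowerSeries.coeff n (L ^ j)) := by
    intro j
    rw [← map_pow, PowerSeries.coeff_map]
  have step : ∀ j ∈ Finset.range (n+1),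
      (((j.factorial : ℚ))⁻¹ • (-Polynomial.X : Polynomial ℚ) ^ j)
        * PowerSeries.coeff n
            ((PowerSeries.map (Polynomial.C : ℚ →+* Polynomial ℚ) L) ^ j)
      = ((n.factorial : ℚ))⁻¹ • (cs1 n j • ((-Polynomial.X : Polynomial ℚ) ^ j)) := by
    intro j _
    rw [hcoeffmap j, cL hL n j]
    rw [Polynomial.smul_eq_C_mul, Polynomial.smul_eq_C_mul, Polynomial.smul_eq_C_mul]
    rw [show Polynomial.C ((j.factorial : ℚ))⁻¹ * (-Polynomial.X : Polynomial ℚ) ^ j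
        * Polynomial.C ((j.factorial : ℚ) / (n.factorial : ℚ) * cs1 n j)
        = (Polynomial.C ((j.factorial : ℚ))⁻¹
            * Polynomial.C ((j.factorial : ℚ) / (n.factorial : ℚ) * cs1 n j))
          * (-Polynomial.X : Polynomial ℚ) ^ j by ring, ← map_mul]
    rw [show Polynomial.C ((n.factorial : ℚ))⁻¹ * (Polynomial.C (cs1 n j)
        * (-Polynomial.X : Polynomial ℚ) ^ j)
      = (Polynomial.C ((n.factorial : ℚ))⁻¹ * Polynomial.C (cs1 n j))
        * (-Polynomial.X : Polynomial ℚ) ^ j by ring, ← map_mul]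
    have hj : (j.factorial : ℚ) ≠ 0 := by exact_mod_cast j.factorial_ne_zero
    congr 1
    field_simp
  rw [Finset.sum_congr rfl step, ← Finset.smul_sum, pol_id n]
  rw [smul_smul]
  congr 1
  rw [div_eq_mul_inv, mul_comm]
end RepB


lemma choose_fact (m l j : ℕ) (h : l + j ≤ m) :
    m.choose l * ((m-l).choose j) * (m-l-j).factorial * l.factorial * j.factorial
      = m.factorial := by
  have h1 := Nat.choose_mul_factorial_mul_factorial (show l ≤ m by omega)
  have h2 := Nat.choose_mul_factorial_mul_factorial (show j ≤ m - l by omega)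
  calc m.choose l * ((m-l).choose j) * (m-l-j).factorial * l.factorial * j.factorial
      = (m.choose l * l.factorial) * ((m-l).choose j * j.factorial * (m - l - j).factorial) := by
        ring
    _ = (m.choose l * l.factorial) * (m-l).factorial := by rw [h2]
    _ = m.factorial := by rw [← h1]

/-- explicit formula for `Aₙ^{(r,k)}(x)` in terms of Stirling numbers of
both kinds:
`Aₙ^{(r,k)}(x) = Σ_{j=0}^n [ Σ_{m=j}^n Σ_{l=0}^{m-j}
 (C(m,l)C(m-l,j)/(C(m-l-j+r,r)(l+1)^k)) S₁(n,m) S₂(m-l-j+r,r) ] (-x)^j`. -/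
theorem cauchy_stmt6
    (r : ℕ) (k : ℤ)
    (L : PowerSeries ℚ)
    (hL : ∀ n : ℕ, PowerSeries.coeff n L = if n = 0 then 0 else (-1 : ℚ) ^ (n - 1) / n)
    (Lu : (PowerSeries ℚ)ˣ)
    (hLu : (Lu : PowerSeries ℚ) * PowerSeries.X = L)
    (G : ℤ → PowerSeries ℚ)
    (hG : ∀ (j : ℤ) (n : ℕ), PowerSeries.coeff n (G j) =
      ∑ m ∈ Finset.range (n + 1),
        ((m.factorial : ℚ) * ((m : ℚ) + 1) ^ j)⁻¹ * PowerSeries.coeff n (L ^ m))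
    (A : ℤ → ℤ → ℕ → Polynomial ℚ)
    (hA : ∀ ρ κ : ℤ, PowerSeries.map (Polynomial.C : ℚ →+* Polynomial ℚ)
        (((Lu ^ (-ρ) : (PowerSeries ℚ)ˣ) : PowerSeries ℚ) * G κ) *
        PowerSeries.mk (fun n => ((-1 : ℚ) ^ n / n.factorial) • ascPochhammer ℚ n) =
      PowerSeries.mk (fun n => ((n.factorial : ℚ)⁻¹) • A ρ κ n))
    (S1 : ℕ → ℕ → ℚ)
    (hS1 : ∀ n : ℕ, descPochhammer ℚ n =
      ∑ l ∈ Finset.range (n + 1), Polynomial.C (S1 n l) * Polynomial.X ^ l)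
    (hS1zero : ∀ n l : ℕ, n < l → S1 n l = 0)
    (S2 : ℕ → ℕ → ℕ)
    (hS200 : S2 0 0 = 1)
    (hS2n0 : ∀ n : ℕ, S2 (n + 1) 0 = 0)
    (hS20m : ∀ m : ℕ, S2 0 (m + 1) = 0)
    (hS2rec : ∀ n m : ℕ, S2 (n + 1) (m + 1) = (m + 1) * S2 n (m + 1) + S2 n m)
    :
    ∀ n : ℕ, A (r : ℤ) k n = ∑ j ∈ Finset.range (n + 1),
      Polynomial.C (∑ m ∈ Finset.Icc j n, ∑ l ∈ Finset.range (m - j + 1),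
        ((m.choose l : ℚ) * ((m - l).choose j : ℚ) /
          (((m - l - j + r).choose r : ℚ) * ((l : ℚ) + 1) ^ k)) *
          S1 n m * (S2 (m - l - j + r) r : ℚ)) * (-Polynomial.X) ^ j := by
  intro n
  -- Step 0: identify S1 with cs1
  have hS1cs : ∀ (N l : ℕ), S1 N l = cs1 N l := by
    intro N l
    rcases le_or_gt l N with h | h
    · have h2 := congrArg (fun p => Polynomial.coeff p l) (hS1 N)
      rw [Polynomial.finset_sum_coeff] at h2
      have h3 : ∀ i ∈ Finset.range (N+1),
          Polynomial.coeff (Polynomial.C (S1 N i) * Polynomial.X ^ i) l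
            = if l = i then S1 N i else 0 := by
        intro i _
        rw [Polynomial.coeff_C_mul, Polynomial.coeff_X_pow]
        split <;> simp
      rw [Finset.sum_congr rfl h3,
        Finset.sum_ite_eq (Finset.range (N+1)) l (fun i => S1 N i),
        if_pos (Finset.mem_range.2 (by omega))] at h2
      exact h2.symm
    · rw [hS1zero N l h, cs1_eq_zero h]
  simp only [hS1cs]
  -- abbreviations
  set e : ℕ → ℚ := fun s =>
    (r.factorial : ℚ) * (S2 (s+r) r : ℚ) / ((s+r).factorial : ℚ) with he
  set g : ℕ → ℚ := fun l => ((l.factorial : ℚ) * ((l : ℚ) + 1) ^ k)⁻¹ with hgdef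
  -- representation of D * G k over ℚ
  have hDG := mul_rep L (L_const L hL) e g _ _
    (repD r L hL Lu hLu S2 hS200 hS2n0 hS20m hS2rec) (hG k)
  set w2 : ℕ → ℚ := fun m => ∑ i ∈ Finset.range (m+1), e i * g (m - i) with hw2
  -- representation over Polynomial ℚ
  have hconstmap : PowerSeries.constantCoeff
      (PowerSeries.map (Polynomial.C : ℚ →+* Polynomial ℚ) L) = 0 := by
    rw [← PowerSeries.coeff_zero_eq_constantCoeff_apply, PowerSeries.coeff_map,
      PowerSeries.coeff_zero_eq_constantCoeff_apply, L_const L hL, map_zero]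
  have hF : ∀ N : ℕ, PowerSeries.coeff N
      (PowerSeries.map (Polynomial.C : ℚ →+* Polynomial ℚ)
        (((Lu ^ (-(r:ℤ)) : (PowerSeries ℚ)ˣ) : PowerSeries ℚ) * G k))
      = ∑ m ∈ Finset.range (N+1), Polynomial.C (w2 m)
          * PowerSeries.coeff N
              ((PowerSeries.map (Polynomial.C : ℚ →+* Polynomial ℚ) L) ^ m) := by
    intro N
    rw [PowerSeries.coeff_map, hDG N, map_sum]
    refine Finset.sum_congr rfl fun m _ => ?_
    rw [map_mul, ← map_pow, PowerSeries.coeff_map]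
  have key := mul_rep (PowerSeries.map (Polynomial.C : ℚ →+* Polynomial ℚ) L) hconstmap
    (fun m => Polynomial.C (w2 m))
    (fun j => ((j.factorial : ℚ))⁻¹ • (-Polynomial.X : Polynomial ℚ) ^ j)
    _ _ hF (repB hL)
  have hAn := congrArg (PowerSeries.coeff n) (hA (r:ℤ) k)
  rw [PowerSeries.coeff_mk, key n] at hAn
  have hfn : (n.factorial : ℚ) ≠ 0 := by exact_mod_cast n.factorial_ne_zero
  have hA2 := congrArg (fun p => (n.factorial : ℚ) • p) hAn
  simp only [smul_smul, mul_inv_cancel₀ hfn, one_smul] at hA2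
  rw [← hA2, Finset.smul_sum]
  have hcoeffpow : ∀ m : ℕ, PowerSeries.coeff n
      ((PowerSeries.map (Polynomial.C : ℚ →+* Polynomial ℚ) L) ^ m)
      = Polynomial.C ((m.factorial : ℚ) / (n.factorial : ℚ) * cs1 n m) := fun m => by
    rw [← map_pow, PowerSeries.coeff_map, cL hL]
  set Tq : ℕ → ℕ → ℕ → ℚ := fun m j l =>
    ((m.choose l : ℚ) * ((m - l).choose j : ℚ) /
          (((m - l - j + r).choose r : ℚ) * ((l : ℚ) + 1) ^ k)) *
          cs1 n m * (S2 (m - l - j + r) r : ℚ) with hTq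
  have step1 : ∀ m ∈ Finset.range (n+1),
      (n.factorial : ℚ) • ((∑ i ∈ Finset.range (m+1), Polynomial.C (w2 i)
          * (((m-i).factorial : ℚ))⁻¹ • (-Polynomial.X : Polynomial ℚ) ^ (m-i))
        * PowerSeries.coeff n
            ((PowerSeries.map (Polynomial.C : ℚ →+* Polynomial ℚ) L) ^ m))
      = ∑ j ∈ Finset.range (m+1),
          Polynomial.C (∑ l ∈ Finset.range (m-j+1), Tq m j l)
            * (-Polynomial.X : Polynomial ℚ) ^ j := by
    intro m hm
    rw [hcoeffpow m,
      ← Finset.sum_range_reflect (fun i => Polynomial.C (w2 i)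
          * (((m-i).factorial : ℚ))⁻¹ • (-Polynomial.X : Polynomial ℚ) ^ (m-i)) (m+1)]
    simp only [Nat.add_sub_cancel]
    rw [Finset.sum_mul, Finset.smul_sum]
    refine Finset.sum_congr rfl fun j hj => ?_
    rw [Finset.mem_range] at hj
    rw [show m - (m - j) = j by omega]
    rw [Polynomial.smul_eq_C_mul, Polynomial.smul_eq_C_mul]
    rw [show Polynomial.C ((n.factorial:ℚ)) * (Polynomial.C (w2 (m-j))
          * (Polynomial.C (((j.factorial:ℚ))⁻¹) * (-Polynomial.X : Polynomial ℚ)^j)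
          * Polynomial.C ((m.factorial:ℚ)/(n.factorial:ℚ) * cs1 n m))
        = Polynomial.C ((n.factorial:ℚ) * (w2 (m-j)) * ((j.factorial:ℚ))⁻¹
            * ((m.factorial:ℚ)/(n.factorial:ℚ) * cs1 n m)) * (-Polynomial.X : Polynomial ℚ)^j
      by simp only [map_mul]; ring]
    congr 1
    rw [hw2]
    simp only
    rw [← Finset.sum_range_reflect (fun i => e i * g (m - j - i)) (m-j+1)]
    simp only [Nat.add_sub_cancel]
    rw [Finset.mul_sum, Finset.sum_mul, Finset.sum_mul]
    congr 1
    refine Finset.sum_congr rfl fun l hl => ?_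
    rw [Finset.mem_range] at hl
    rw [show m - j - (m - j - l) = l by omega, show m - j - l = m - l - j by omega, hTq]
    simp only [he, hgdef]
    have h1 : (m.choose l : ℚ) * ((m-l).choose j : ℚ) * ((m-l-j).factorial : ℚ)
        * (l.factorial : ℚ) * (j.factorial : ℚ) = (m.factorial : ℚ) := by
      exact_mod_cast congrArg (Nat.cast : ℕ → ℚ) (choose_fact m l j (by omega))
    have h2n := Nat.choose_mul_factorial_mul_factorial (Nat.le_add_left r (m-l-j))
    rw [Nat.add_sub_cancel] at h2n
    have h2 : ((m-l-j+r).choose r : ℚ) * (r.factorial : ℚ) * ((m-l-j).factorial : ℚ)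
        = ((m-l-j+r).factorial : ℚ) := by
      exact_mod_cast congrArg (Nat.cast : ℕ → ℚ) h2n
    rw [← h1, ← h2]
    have hz : ((l:ℚ)+1)^k ≠ 0 := by
      apply zpow_ne_zero
      positivity
    have c1 : ((m-l-j+r).choose r : ℚ) ≠ 0 := by
      have := Nat.choose_pos (Nat.le_add_left r (m-l-j))
      positivity
    have f1 : (r.factorial : ℚ) ≠ 0 := by exact_mod_cast r.factorial_ne_zero
    have f2 : ((m-l-j).factorial : ℚ) ≠ 0 := by exact_mod_cast (m-l-j).factorial_ne_zero
    have f3 : (l.factorial : ℚ) ≠ 0 := by exact_mod_cast l.factorial_ne_zero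
    have f4 : (j.factorial : ℚ) ≠ 0 := by exact_mod_cast j.factorial_ne_zero
    field_simp
  rw [Finset.sum_congr rfl step1]
  have hvanish : ∀ m j : ℕ, m < j → (∑ l ∈ Finset.range (m-j+1), Tq m j l) = 0 := by
    intro m j hmj
    apply Finset.sum_eq_zero
    intro l _
    rw [hTq]
    simp only
    rw [Nat.choose_eq_zero_of_lt (show m - l < j by omega)]
    simp
  have ext1 : ∀ m ∈ Finset.range (n+1),
      ∑ j ∈ Finset.range (m+1),
          Polynomial.C (∑ l ∈ Finset.range (m-j+1), Tq m j l)
            * (-Polynomial.X : Polynomial ℚ) ^ j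
      = ∑ j ∈ Finset.range (n+1),
          Polynomial.C (∑ l ∈ Finset.range (m-j+1), Tq m j l)
            * (-Polynomial.X : Polynomial ℚ) ^ j := by
    intro m hm
    rw [Finset.mem_range] at hm
    apply Finset.sum_subset (Finset.range_subset_range.2 (by omega))
    intro j _ hj
    rw [Finset.mem_range, not_lt] at hj
    rw [hvanish m j (by omega), map_zero, zero_mul]
  rw [Finset.sum_congr rfl ext1, Finset.sum_comm]
  refine Finset.sum_congr rfl fun j hj => ?_
  rw [Finset.mem_range] at hj
  have shrink : ∑ m ∈ Finset.range (n+1),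
      Polynomial.C (∑ l ∈ Finset.range (m-j+1), Tq m j l)
        * (-Polynomial.X : Polynomial ℚ) ^ j
      = ∑ m ∈ Finset.Icc j n,
          Polynomial.C (∑ l ∈ Finset.range (m-j+1), Tq m j l)
            * (-Polynomial.X : Polynomial ℚ) ^ j := by
    refine (Finset.sum_subset ?_ ?_).symm
    · intro m hm
      rw [Finset.mem_Icc] at hm
      rw [Finset.mem_range]
      omega
    · intro m hm1 hm2
      rw [Finset.mem_range] at hm1
      rw [Finset.mem_Icc, not_and_or] at hm2
      have : m < j := by omega
      rw [hvanish m j this, map_zero, zero_mul]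
  rw [shrink, ← Finset.sum_mul, ← map_sum]
end

section
/- For all n ≥ 0 and integers r, k, A_n^{(r,k)}(x) = Σ_{j=0}^n [ Σ_{l=0}^{n-j} Σ_{a=0}^{n-l-j} (-1)^j · C(n, l+j) · C(n-l-j, a) · S₁(l+j, j) · B_a^{(a-r+1)}(1) · C_{n-j-l-a}^{(k)} ] · x^j, where B_a^{(α)}(x) are the Bernoulli polynomials of order α and C_m^{(k)} are the poly-Cauchy numbers of the first kind. -/
noncomputable section
namespace C7
open PowerSeries Finset

lemma coeff_uXpow_lt (u : (PowerSeries ℚ)ˣ) (m n : ℕ) (h : n < m) :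
    PowerSeries.coeff (R := ℚ) n (((u : PowerSeries ℚ) * X) ^ m) = 0 := by
  rw [mul_pow, PowerSeries.coeff_mul]
  refine Finset.sum_eq_zero fun p hp => ?_
  rw [Finset.HasAntidiagonal.mem_antidiagonal] at hp
  rw [PowerSeries.coeff_X_pow, if_neg, mul_zero]
  omega

lemma triangle (n : ℕ) (g : ℕ → ℕ → ℚ) (hg : ∀ i j, n < i + j → g i j = 0) :
    ∑ m ∈ range (n+1), ∑ p ∈ antidiagonal m, g p.1 p.2
      = ∑ i ∈ range (n+1), ∑ j ∈ range (n+1), g i j := by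
  rw [← Finset.sum_biUnion]
  · rw [← Finset.sum_product']
    apply Finset.sum_subset
    · intro p hp
      simp only [Finset.mem_biUnion, Finset.mem_range, Finset.HasAntidiagonal.mem_antidiagonal] at hp
      obtain ⟨m, hm, rfl⟩ := hp
      simp only [Finset.mem_product, Finset.mem_range]
      omega
    · intro p hp hnp
      apply hg
      by_contra hc
      exact hnp (Finset.mem_biUnion.2 ⟨p.1+p.2, Finset.mem_range.2 (by omega),
        Finset.HasAntidiagonal.mem_antidiagonal.2 rfl⟩)
  · intro a _ b _ hab
    simp only [Function.onFun, Finset.disjoint_left, Finset.HasAntidiagonal.mem_antidiagonal]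
    intro p h1 h2
    omega

/-- substitution of `u*X` into a power series, coefficientwise -/
def Phi (u : (PowerSeries ℚ)ˣ) : PowerSeries ℚ →+* PowerSeries ℚ where
  toFun F := PowerSeries.mk fun n => ∑ m ∈ range (n+1),
      PowerSeries.coeff (R := ℚ) m F * PowerSeries.coeff (R := ℚ) n (((u : PowerSeries ℚ) * X) ^ m)
  map_zero' := by
    ext n
    simp
  map_add' F G := by
    ext n
    simp [Finset.sum_add_distrib, add_mul]
  map_one' := by
    ext n
    simp only [coeff_mk, PowerSeries.coeff_one]
    rw [Finset.sum_eq_single 0]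
    · simp
    · intro b _ hb
      simp [hb]
    · simp
  map_mul' F G := by
    ext n
    simp only [coeff_mk, PowerSeries.coeff_mul]
    set f : ℕ → ℚ := fun i => PowerSeries.coeff (R := ℚ) i F with hf
    set g : ℕ → ℚ := fun j => PowerSeries.coeff (R := ℚ) j G with hg
    have hcz : ∀ m p, p < m → PowerSeries.coeff (R := ℚ) p (((u : PowerSeries ℚ) * X) ^ m) = 0 :=
      fun m p h => coeff_uXpow_lt u m p h
    have hsq : ∑ m ∈ range (n+1), (∑ p ∈ antidiagonal m, f p.1 * g p.2) *
          PowerSeries.coeff (R := ℚ) n (((u : PowerSeries ℚ) * X) ^ m)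
        = ∑ i ∈ range (n+1), ∑ j ∈ range (n+1), f i * g j *
            PowerSeries.coeff (R := ℚ) n (((u : PowerSeries ℚ) * X) ^ (i+j)) := by
      rw [← triangle n (fun i j => f i * g j *
            PowerSeries.coeff (R := ℚ) n (((u : PowerSeries ℚ) * X) ^ (i+j)))
        (fun i j hij => by rw [hcz _ _ hij, mul_zero])]
      refine Finset.sum_congr rfl fun m _ => ?_
      rw [Finset.sum_mul]
      refine Finset.sum_congr rfl fun p hp => ?_
      rw [Finset.HasAntidiagonal.mem_antidiagonal] at hp
      simp only [hp]
    rw [hsq]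
    have hR : ∀ p ∈ antidiagonal n,
        (∑ m ∈ range (p.1+1), f m * PowerSeries.coeff (R := ℚ) p.1 (((u : PowerSeries ℚ) * X) ^ m)) *
        (∑ m ∈ range (p.2+1), g m * PowerSeries.coeff (R := ℚ) p.2 (((u : PowerSeries ℚ) * X) ^ m))
        = ∑ i ∈ range (n+1), ∑ j ∈ range (n+1), f i * g j *
            (PowerSeries.coeff (R := ℚ) p.1 (((u : PowerSeries ℚ) * X) ^ i) *
             PowerSeries.coeff (R := ℚ) p.2 (((u : PowerSeries ℚ) * X) ^ j)) := by
      intro p hp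
      rw [Finset.HasAntidiagonal.mem_antidiagonal] at hp
      rw [Finset.sum_subset (Finset.range_subset_range.2 (by omega : p.1+1 ≤ n+1))
          (fun i _ hi => by rw [hcz _ _ (by simp at hi ⊢; omega), mul_zero]),
        Finset.sum_subset (Finset.range_subset_range.2 (by omega : p.2+1 ≤ n+1))
          (fun j _ hj => by rw [hcz _ _ (by simp at hj ⊢; omega), mul_zero]),
        Finset.sum_mul_sum]
      exact Finset.sum_congr rfl fun i _ => Finset.sum_congr rfl fun j _ => by ring
    rw [Finset.sum_congr rfl hR]
    have hR2 : ∑ p ∈ antidiagonal n, ∑ i ∈ range (n+1), ∑ j ∈ range (n+1),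
          f i * g j * (PowerSeries.coeff (R := ℚ) p.1 (((u : PowerSeries ℚ) * X) ^ i) *
             PowerSeries.coeff (R := ℚ) p.2 (((u : PowerSeries ℚ) * X) ^ j))
        = ∑ i ∈ range (n+1), ∑ j ∈ range (n+1), f i * g j *
            PowerSeries.coeff (R := ℚ) n (((u : PowerSeries ℚ) * X) ^ (i+j)) := by
      rw [Finset.sum_comm]
      refine Finset.sum_congr rfl fun i _ => ?_
      rw [Finset.sum_comm]
      refine Finset.sum_congr rfl fun j _ => ?_
      rw [← Finset.mul_sum, ← PowerSeries.coeff_mul, ← pow_add]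
    exact hR2.symm

lemma coeff_Phi (u : (PowerSeries ℚ)ˣ) (F : PowerSeries ℚ) (n : ℕ) :
    PowerSeries.coeff (R := ℚ) n (Phi u F) = ∑ m ∈ range (n+1),
      PowerSeries.coeff (R := ℚ) m F * PowerSeries.coeff (R := ℚ) n (((u : PowerSeries ℚ) * X) ^ m) := by
  simp [Phi]

lemma Phi_X (u : (PowerSeries ℚ)ˣ) : Phi u X = (u : PowerSeries ℚ) * X := by
  ext n
  rw [coeff_Phi, Finset.sum_eq_single 1]
  · rw [PowerSeries.coeff_X, if_pos rfl, one_mul, pow_one]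
  · intro b _ hb
    rw [PowerSeries.coeff_X, if_neg hb, zero_mul]
  · intro h1
    have hn : n = 0 := by simp at h1; omega
    subst hn
    rw [PowerSeries.coeff_X, if_pos rfl, one_mul, pow_one,
      ← pow_one ((u : PowerSeries ℚ) * X), coeff_uXpow_lt u 1 0 one_pos]

lemma coeff_Phi_mul (u : (PowerSeries ℚ)ˣ) (F G : PowerSeries ℚ) (a : ℕ) :
    PowerSeries.coeff (R := ℚ) a (Phi u F * G) = ∑ m ∈ range (a+1),
      PowerSeries.coeff (R := ℚ) m F * PowerSeries.coeff (R := ℚ) a (((u : PowerSeries ℚ) * X) ^ m * G) := by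
  rw [PowerSeries.coeff_mul]
  have h1 : ∀ p ∈ antidiagonal a,
      PowerSeries.coeff (R := ℚ) p.1 (Phi u F) * PowerSeries.coeff (R := ℚ) p.2 G
      = ∑ m ∈ range (a+1), PowerSeries.coeff (R := ℚ) m F *
          (PowerSeries.coeff (R := ℚ) p.1 (((u : PowerSeries ℚ) * X) ^ m) *
            PowerSeries.coeff (R := ℚ) p.2 G) := by
    intro p hp
    rw [Finset.HasAntidiagonal.mem_antidiagonal] at hp
    rw [coeff_Phi, Finset.sum_subset (Finset.range_subset_range.2 (by omega : p.1+1 ≤ a+1))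
      (fun i _ hi => by rw [coeff_uXpow_lt u _ _ (by simp at hi ⊢; omega), mul_zero]),
      Finset.sum_mul]
    exact Finset.sum_congr rfl fun m _ => by ring
  rw [Finset.sum_congr rfl h1, Finset.sum_comm]
  exact Finset.sum_congr rfl fun m _ => by
    rw [← Finset.mul_sum, ← PowerSeries.coeff_mul]

lemma derivative_exp : d⁄dX ℚ (PowerSeries.exp ℚ) = PowerSeries.exp ℚ := by
  ext n
  rw [PowerSeries.coeff_derivative, PowerSeries.coeff_exp, PowerSeries.coeff_exp]
  simp only [eq_ratCast, Rat.cast_eq_id, id]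
  rw [Nat.factorial_succ]
  push_cast
  rw [div_mul_eq_mul_div, div_eq_div_iff (by positivity) (by positivity)]
  ring

lemma rec_c (m n : ℕ) :
    ((n:ℚ)+1) * PowerSeries.coeff (R := ℚ) (n+1) ((PowerSeries.exp ℚ - 1)^(m+1))
      = ((m:ℚ)+1) * (PowerSeries.coeff (R := ℚ) n ((PowerSeries.exp ℚ - 1)^m)
          + PowerSeries.coeff (R := ℚ) n ((PowerSeries.exp ℚ - 1)^(m+1))) := by
  have hde : d⁄dX ℚ (PowerSeries.exp ℚ - 1) = PowerSeries.exp ℚ := by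
    rw [map_sub, derivative_exp]
    simp
  have hD : d⁄dX ℚ ((PowerSeries.exp ℚ - 1)^(m+1))
      = PowerSeries.C (R := ℚ) ((m:ℚ)+1) * ((PowerSeries.exp ℚ - 1)^m
          + (PowerSeries.exp ℚ - 1)^(m+1)) := by
    rw [Derivation.leibniz_pow, hde, Nat.add_sub_cancel, smul_eq_mul, nsmul_eq_mul]
    have h4 : ((m+1 : ℕ) : ℚ⟦X⟧) = PowerSeries.C (R := ℚ) ((m:ℚ)+1) := by
      rw [← map_natCast (PowerSeries.C (R := ℚ)) (m+1)]
      congr 1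
      push_cast
      ring
    rw [h4]
    ring
  have h2 := congrArg (PowerSeries.coeff (R := ℚ) n) hD
  rw [PowerSeries.coeff_derivative, PowerSeries.coeff_C_mul, map_add] at h2
  linear_combination h2

lemma Phi_L (L : PowerSeries ℚ)
    (hL : ∀ n : ℕ, PowerSeries.coeff (R := ℚ) n L = if n = 0 then 0 else (-1 : ℚ) ^ (n - 1) / n)
    (Eu : (PowerSeries ℚ)ˣ)
    (hEu : (Eu : PowerSeries ℚ) * PowerSeries.X = PowerSeries.exp ℚ - 1) :
    Phi Eu L = X := by
  ext n
  rw [coeff_Phi]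
  simp only [hEu]
  cases n with
  | zero =>
    rw [Finset.sum_range_one]
    simp [hL 0]
  | succ n =>
    have hne : ((n:ℚ)+1) ≠ 0 := by positivity
    apply mul_left_cancel₀ hne
    have hterm : ∀ i ∈ range (n+1),
        ((n:ℚ)+1) * (PowerSeries.coeff (R := ℚ) (i+1) L *
          PowerSeries.coeff (R := ℚ) (n+1) ((PowerSeries.exp ℚ - 1)^(i+1)))
        = ((-1:ℚ)^i * PowerSeries.coeff (R := ℚ) n ((PowerSeries.exp ℚ - 1)^i)
            - (-1:ℚ)^(i+1) * PowerSeries.coeff (R := ℚ) n ((PowerSeries.exp ℚ - 1)^(i+1))) := by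
      intro i _
      rw [hL (i+1), if_neg (Nat.succ_ne_zero i), Nat.add_sub_cancel]
      have hrec := rec_c i n
      have hne2 : ((i:ℚ)+1) ≠ 0 := by positivity
      push_cast
      field_simp
      linear_combination ((-1:ℚ)^i) * hrec
    rw [Finset.mul_sum, Finset.sum_range_succ', Finset.sum_congr rfl hterm,
      Finset.sum_range_sub']
    have hz : PowerSeries.coeff (R := ℚ) n ((PowerSeries.exp ℚ - 1)^(n+1)) = 0 := by
      rw [← hEu]
      exact coeff_uXpow_lt Eu (n+1) n (Nat.lt_succ_self n)
    rw [hz, hL 0, if_pos rfl]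
    simp only [pow_zero, one_mul, mul_zero, zero_mul, sub_zero, add_zero,
      PowerSeries.coeff_one, PowerSeries.coeff_X]
    by_cases hn : n = 0
    · subst hn
      norm_num
    · rw [if_neg hn, if_neg (by omega : ¬ n + 1 = 1)]
      ring

section Res
variable (Eu : (PowerSeries ℚ)ˣ)
  (hEu : (Eu : PowerSeries ℚ) * PowerSeries.X = PowerSeries.exp ℚ - 1)

local notation "UU" => ((Eu : (PowerSeries ℚ)ˣ) : PowerSeries ℚ)
local notation "VV" => ((Eu⁻¹ : (PowerSeries ℚ)ˣ) : PowerSeries ℚ)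

lemma VU_one : VV * UU = 1 := by
  rw [← Units.val_mul]
  simp

include hEu in
lemma exp_eq : UU + X * d⁄dX ℚ UU = PowerSeries.exp ℚ := by
  have h := congrArg (d⁄dX ℚ) hEu
  rw [Derivation.leibniz, map_sub, derivative_exp, derivative_X] at h
  simp only [smul_eq_mul, mul_one, Derivation.map_one_eq_zero, sub_zero] at h
  linear_combination h

include hEu in
lemma constU : PowerSeries.constantCoeff (R := ℚ) UU = 1 := by
  have h := congrArg (PowerSeries.coeff (R := ℚ) 1) hEu
  rw [PowerSeries.coeff_succ_mul_X, map_sub, PowerSeries.coeff_exp,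
    PowerSeries.coeff_one] at h
  rw [← PowerSeries.coeff_zero_eq_constantCoeff, h]
  norm_num

include hEu in
lemma constV : PowerSeries.constantCoeff (R := ℚ) VV = 1 := by
  have h := congrArg (PowerSeries.constantCoeff (R := ℚ)) (VU_one Eu)
  rw [map_mul, map_one, constU Eu hEu, mul_one] at h
  exact h

include hEu in
lemma res0 (e : ℕ) :
    PowerSeries.coeff (R := ℚ) (e+1) (VV^(e+2) * PowerSeries.exp ℚ) = 0 := by
  have e1 : VV * UU = 1 := VU_one Eu
  have hexp := exp_eq Eu hEu
  have hP : VV^(e+2) * UU^(e+2) = 1 := by rw [← mul_pow, e1, one_pow]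
  have hQ : VV^(e+1) * UU^(e+2) = UU := by
    calc VV^(e+1) * UU^(e+2) = (VV*UU)^(e+1) * UU := by ring
    _ = UU := by rw [e1, one_pow, one_mul]
  have hcast : ((e+1 : ℕ) : ℚ⟦X⟧) = PowerSeries.C (R := ℚ) ((e:ℚ)+1) := by
    rw [← map_natCast (PowerSeries.C (R := ℚ)) (e+1)]
    congr 1
    push_cast
    ring
  have hDVd : d⁄dX ℚ (VV^(e+1))
      = -(PowerSeries.C (R := ℚ) ((e:ℚ)+1) * (VV^(e+2) * d⁄dX ℚ UU)) := by
    rw [Derivation.leibniz_pow, (d⁄dX ℚ).leibniz_of_mul_eq_one e1, Nat.add_sub_cancel]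
    simp only [smul_eq_mul, nsmul_eq_mul]
    rw [hcast]
    ring
  have hkey : PowerSeries.C (R := ℚ) ((e:ℚ)+1) * (VV^(e+2) * PowerSeries.exp ℚ)
      = PowerSeries.C (R := ℚ) ((e:ℚ)+1) * VV^(e+1) - d⁄dX ℚ (VV^(e+1)) * X := by
    have hUne : (UU^(e+2) : ℚ⟦X⟧) ≠ 0 := pow_ne_zero _ Eu.ne_zero
    apply mul_right_cancel₀ hUne
    rw [hDVd]
    calc PowerSeries.C (R := ℚ) ((e:ℚ)+1) * (VV^(e+2) * PowerSeries.exp ℚ) * UU^(e+2)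
        = PowerSeries.C (R := ℚ) ((e:ℚ)+1) * PowerSeries.exp ℚ * (VV^(e+2) * UU^(e+2)) := by
          ring
      _ = PowerSeries.C (R := ℚ) ((e:ℚ)+1) * (UU + X * d⁄dX ℚ UU) := by
          rw [hP, mul_one, hexp]
      _ = PowerSeries.C (R := ℚ) ((e:ℚ)+1) * (VV^(e+1) * UU^(e+2))
            + PowerSeries.C (R := ℚ) ((e:ℚ)+1) * (VV^(e+2) * UU^(e+2)) * (d⁄dX ℚ UU) * X := by
          rw [hQ, hP]
          ring
      _ = (PowerSeries.C (R := ℚ) ((e:ℚ)+1) * VV^(e+1)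
            - -(PowerSeries.C (R := ℚ) ((e:ℚ)+1) * (VV^(e+2) * d⁄dX ℚ UU)) * X) * UU^(e+2) := by
          ring
  have h6 := congrArg (PowerSeries.coeff (R := ℚ) (e+1)) hkey
  rw [map_sub, PowerSeries.coeff_C_mul, PowerSeries.coeff_C_mul,
    PowerSeries.coeff_succ_mul_X, PowerSeries.coeff_derivative] at h6
  have hne : ((e:ℚ)+1) ≠ 0 := by positivity
  apply mul_left_cancel₀ hne
  rw [h6]
  ring

include hEu in
lemma Phi_Lu (L : PowerSeries ℚ)
    (hL : ∀ n : ℕ, PowerSeries.coeff (R := ℚ) n L = if n = 0 then 0 else (-1 : ℚ) ^ (n - 1) / n)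
    (Lu : (PowerSeries ℚ)ˣ) (hLu : (Lu : PowerSeries ℚ) * PowerSeries.X = L) :
    Phi Eu (Lu : PowerSeries ℚ) = VV := by
  have h1 : Phi Eu ((Lu : ℚ⟦X⟧) * X) = X := by rw [hLu, Phi_L L hL Eu hEu]
  rw [map_mul, Phi_X] at h1
  have h2 : VV * ((Eu : ℚ⟦X⟧) * X) = X := by
    rw [← mul_assoc, VU_one, one_mul]
  have hne : ((Eu : ℚ⟦X⟧) * X) ≠ 0 := mul_ne_zero Eu.ne_zero PowerSeries.X_ne_zero
  exact mul_right_cancel₀ hne (h1.trans h2.symm)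

include hEu in
lemma Phi_Lu_zpow (L : PowerSeries ℚ)
    (hL : ∀ n : ℕ, PowerSeries.coeff (R := ℚ) n L = if n = 0 then 0 else (-1 : ℚ) ^ (n - 1) / n)
    (Lu : (PowerSeries ℚ)ˣ) (hLu : (Lu : PowerSeries ℚ) * PowerSeries.X = L) (r : ℤ) :
    Phi Eu ((Lu^(-r) : (PowerSeries ℚ)ˣ) : PowerSeries ℚ)
      = ((Eu^r : (PowerSeries ℚ)ˣ) : PowerSeries ℚ) := by
  have hu : Units.map (Phi Eu).toMonoidHom Lu = Eu⁻¹ := by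
    apply Units.ext
    rw [Units.coe_map]
    exact Phi_Lu Eu hEu L hL Lu hLu
  calc Phi Eu ((Lu^(-r) : (PowerSeries ℚ)ˣ) : PowerSeries ℚ)
      = ((Units.map (Phi Eu).toMonoidHom (Lu^(-r)) : (PowerSeries ℚ)ˣ) : PowerSeries ℚ) := by
        rw [Units.coe_map]
        rfl
    _ = (((Eu⁻¹)^(-r) : (PowerSeries ℚ)ˣ) : PowerSeries ℚ) := by rw [map_zpow, hu]
    _ = ((Eu^r : (PowerSeries ℚ)ˣ) : PowerSeries ℚ) := by
        congr 1
        rw [inv_zpow, zpow_neg, inv_inv]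

lemma zpow_sub_coe (z : ℤ) (s : ℕ) :
    ((Eu^(z - s) : (PowerSeries ℚ)ˣ) : PowerSeries ℚ)
      = ((Eu^z : (PowerSeries ℚ)ˣ) : PowerSeries ℚ) * VV^s := by
  have h : Eu^(z - (s:ℤ)) = Eu^z * (Eu⁻¹)^s := by
    rw [← zpow_natCast (Eu⁻¹) s, inv_zpow, ← zpow_neg, ← zpow_add, sub_eq_add_neg]
  rw [h, Units.val_mul, Units.val_pow_eq_pow_val]

include hEu in
lemma key1 (L : PowerSeries ℚ)
    (hL : ∀ n : ℕ, PowerSeries.coeff (R := ℚ) n L = if n = 0 then 0 else (-1 : ℚ) ^ (n - 1) / n)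
    (Lu : (PowerSeries ℚ)ˣ) (hLu : (Lu : PowerSeries ℚ) * PowerSeries.X = L)
    (r : ℤ) (a : ℕ) :
    PowerSeries.coeff (R := ℚ) a ((Lu^(-r) : (PowerSeries ℚ)ˣ) : PowerSeries ℚ)
      = PowerSeries.coeff (R := ℚ) a
          (((Eu^(r - a - 1) : (PowerSeries ℚ)ˣ) : PowerSeries ℚ) * PowerSeries.exp ℚ) := by
  have hUV : ∀ m : ℕ, ((Eu : ℚ⟦X⟧))^m * VV^m = 1 := fun m => by
    rw [← mul_pow, mul_comm, VU_one, one_pow]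
  have hG : PowerSeries.coeff (R := ℚ) a (Phi Eu ((Lu^(-r) : (PowerSeries ℚ)ˣ) : PowerSeries ℚ)
        * (VV^(a+1) * PowerSeries.exp ℚ))
      = PowerSeries.coeff (R := ℚ) a ((Lu^(-r) : (PowerSeries ℚ)ˣ) : PowerSeries ℚ) := by
    rw [coeff_Phi_mul, Finset.sum_eq_single a]
    · have hsimp : ((Eu : ℚ⟦X⟧) * X)^a * (VV^(a+1) * PowerSeries.exp ℚ)
          = X^a * (VV * PowerSeries.exp ℚ) := by
        rw [mul_pow]
        calc ((Eu : ℚ⟦X⟧))^a * X^a * (VV^(a+1) * PowerSeries.exp ℚ)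
            = X^a * (VV * PowerSeries.exp ℚ) * (((Eu : ℚ⟦X⟧))^a * VV^a) := by ring
          _ = X^a * (VV * PowerSeries.exp ℚ) := by rw [hUV a, mul_one]
      rw [hsimp, PowerSeries.coeff_X_pow_mul', if_pos le_rfl, Nat.sub_self,
        PowerSeries.coeff_zero_eq_constantCoeff, map_mul, constV Eu hEu,
        PowerSeries.constantCoeff_exp, one_mul, mul_one]
    · intro m hm hma
      have hma' : m < a := by simp at hm; omega
      obtain ⟨e, he⟩ : ∃ e, a - m = e + 1 := ⟨a - m - 1, by omega⟩
      have hpow : VV^(a+1) = VV^m * VV^(e+2) := by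
        rw [← pow_add]
        congr 1
        omega
      have hsimp : ((Eu : ℚ⟦X⟧) * X)^m * (VV^(a+1) * PowerSeries.exp ℚ)
          = X^m * (VV^(e+2) * PowerSeries.exp ℚ) := by
        rw [mul_pow, hpow]
        calc ((Eu : ℚ⟦X⟧))^m * X^m * (VV^m * VV^(e+2) * PowerSeries.exp ℚ)
            = X^m * (VV^(e+2) * PowerSeries.exp ℚ) * (((Eu : ℚ⟦X⟧))^m * VV^m) := by ring
          _ = X^m * (VV^(e+2) * PowerSeries.exp ℚ) := by rw [hUV m, mul_one]
      rw [hsimp, PowerSeries.coeff_X_pow_mul', if_pos (le_of_lt hma'), he,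
        res0 Eu hEu e, mul_zero]
    · intro h
      exact absurd (Finset.mem_range.2 (Nat.lt_succ_self a)) h
  rw [Phi_Lu_zpow Eu hEu L hL Lu hLu r] at hG
  have hstep : ((Eu^r : (PowerSeries ℚ)ˣ) : PowerSeries ℚ) * (VV^(a+1) * PowerSeries.exp ℚ)
      = ((Eu^(r - a - 1) : (PowerSeries ℚ)ˣ) : PowerSeries ℚ) * PowerSeries.exp ℚ := by
    calc ((Eu^r : (PowerSeries ℚ)ˣ) : PowerSeries ℚ) * (VV^(a+1) * PowerSeries.exp ℚ)
        = (((Eu^r : (PowerSeries ℚ)ˣ) : PowerSeries ℚ) * VV^(a+1)) * PowerSeries.exp ℚ := by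
          ring
      _ = ((Eu^(r - ((a+1 : ℕ) : ℤ)) : (PowerSeries ℚ)ˣ) : PowerSeries ℚ)
            * PowerSeries.exp ℚ := by rw [zpow_sub_coe]
      _ = ((Eu^(r - a - 1) : (PowerSeries ℚ)ˣ) : PowerSeries ℚ) * PowerSeries.exp ℚ := by
          congr 2
          push_cast
          ring
  rw [← hG, hstep]

include hEu in
lemma Bval (B : ℤ → ℕ → Polynomial ℚ)
    (hB : ∀ α : ℤ, PowerSeries.map (Polynomial.C : ℚ →+* Polynomial ℚ)
        ((Eu ^ (-α) : (PowerSeries ℚ)ˣ) : PowerSeries ℚ) *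
        PowerSeries.mk (fun n => ((n.factorial : ℚ)⁻¹) • (Polynomial.X : Polynomial ℚ) ^ n) =
      PowerSeries.mk (fun n => ((n.factorial : ℚ)⁻¹) • B α n))
    (α : ℤ) (a : ℕ) :
    PowerSeries.coeff (R := ℚ) a (((Eu^(-α) : (PowerSeries ℚ)ˣ) : PowerSeries ℚ) * PowerSeries.exp ℚ)
      = (a.factorial : ℚ)⁻¹ * (B α a).eval 1 := by
  have h := congrArg (PowerSeries.coeff (R := Polynomial ℚ) a) (hB α)
  rw [PowerSeries.coeff_mul, PowerSeries.coeff_mk] at h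
  have h2 := congrArg (Polynomial.eval (1:ℚ)) h
  simp only [Polynomial.eval_finset_sum, Polynomial.eval_mul, Polynomial.eval_smul,
    Polynomial.eval_pow, Polynomial.eval_X, Polynomial.eval_C, PowerSeries.coeff_map,
    PowerSeries.coeff_mk, one_pow, smul_eq_mul, mul_one] at h2
  rw [PowerSeries.coeff_mul]
  rw [← h2]
  refine Finset.sum_congr rfl fun p _ => ?_
  congr 1
  rw [PowerSeries.coeff_exp]
  simp [one_div]

end Res

section Asc
variable (S1 : ℕ → ℕ → ℚ)
    (hS1 : ∀ n : ℕ, descPochhammer ℚ n =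
      ∑ l ∈ Finset.range (n + 1), Polynomial.C (S1 n l) * Polynomial.X ^ l)
    (hS1zero : ∀ n l : ℕ, n < l → S1 n l = 0)

lemma desc_aeval_neg (j : ℕ) :
    Polynomial.aeval (-Polynomial.X : Polynomial ℚ) (descPochhammer ℚ j)
      = Polynomial.C ((-1:ℚ)^j) * ascPochhammer ℚ j := by
  induction j with
  | zero => simp [descPochhammer_zero, ascPochhammer_zero]
  | succ n ih =>
    rw [descPochhammer_succ_right, map_mul, ih, ascPochhammer_succ_right]
    rw [map_sub, Polynomial.aeval_X, map_natCast]
    have hC : (Polynomial.C ((-1:ℚ)^(n+1)) : Polynomial ℚ)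
        = Polynomial.C ((-1:ℚ)^n) * (-1) := by
      rw [pow_succ, map_mul, map_neg, map_one]
    rw [hC]
    push_cast
    ring

include hS1 in
lemma asc_eq (j : ℕ) :
    ascPochhammer ℚ j = ∑ l ∈ Finset.range (j+1),
      Polynomial.C ((-1:ℚ)^(j+l) * S1 j l) * Polynomial.X^l := by
  have h := desc_aeval_neg j
  rw [hS1 j, map_sum] at h
  have h2 := congrArg (fun p => Polynomial.C ((-1:ℚ)^j) * p) h
  have hCC : Polynomial.C ((-1:ℚ)^j) * (Polynomial.C ((-1:ℚ)^j) * ascPochhammer ℚ j)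
      = ascPochhammer ℚ j := by
    rw [← mul_assoc, ← map_mul, ← pow_add, ← two_mul, pow_mul]
    norm_num
  rw [hCC] at h2
  rw [← h2, Finset.mul_sum]
  refine Finset.sum_congr rfl fun l _ => ?_
  simp only [map_mul, map_pow, Polynomial.aeval_X, Polynomial.aeval_C,
    Polynomial.algebraMap_eq]
  rw [neg_pow]
  have h1 : ((-1 : Polynomial ℚ))^l = Polynomial.C ((-1:ℚ)^l) := by
    rw [← map_one (Polynomial.C (R := ℚ)), ← map_neg, ← map_pow]
  have h1' : (Polynomial.C (-1:ℚ))^j = Polynomial.C ((-1:ℚ)^j) := by rw [← map_pow]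
  rw [h1, h1']
  rw [← mul_assoc, ← mul_assoc, ← Polynomial.C_mul, ← Polynomial.C_mul]
  congr 1
  simp only [← Polynomial.C_pow, ← Polynomial.C_mul]
  congr 1
  ring

include hS1 hS1zero in
lemma asc_coeff (j t : ℕ) :
    (ascPochhammer ℚ j).coeff t = (-1:ℚ)^(j+t) * S1 j t := by
  rw [asc_eq S1 hS1 j, Polynomial.finset_sum_coeff]
  simp only [Polynomial.coeff_C_mul, Polynomial.coeff_X_pow]
  rw [Finset.sum_eq_single t (fun b _ hb => by rw [if_neg (fun h => hb h.symm), mul_zero])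
    (fun ht => by rw [hS1zero j t (by simp at ht; omega)]; simp)]
  simp

lemma neg_one_pow_helper (s t : ℕ) : (-1:ℚ)^s * (-1:ℚ)^(s+t) = (-1:ℚ)^t := by
  rw [← pow_add, show s+(s+t) = 2*s+t by ring, pow_add, pow_mul]
  norm_num

end Asc
end C7


end



/-- for all `n ≥ 0` and integers `r, k`,
`Aₙ^{(r,k)}(x) = Σ_{j=0}^n [Σ_{l=0}^{n-j} Σ_{a=0}^{n-l-j} (-1)^j C(n,l+j)
 C(n-l-j,a) S₁(l+j,j) B_a^{(a-r+1)}(1) C_{n-j-l-a}^{(k)}] x^j`,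
where `B` are higher-order Bernoulli polynomials and `Cp m` are the poly-Cauchy numbers of
the first kind, i.e. `Lif_k(log(1+t)) = Σ_m Cp m · tᵐ/m!`. -/
theorem cauchy_stmt7
    (r k : ℤ)
    (L : PowerSeries ℚ)
    (hL : ∀ n : ℕ, PowerSeries.coeff n L = if n = 0 then 0 else (-1 : ℚ) ^ (n - 1) / n)
    (Lu : (PowerSeries ℚ)ˣ)
    (hLu : (Lu : PowerSeries ℚ) * PowerSeries.X = L)
    (G : ℤ → PowerSeries ℚ)
    (hG : ∀ (j : ℤ) (n : ℕ), PowerSeries.coeff n (G j) =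
      ∑ m ∈ Finset.range (n + 1),
        ((m.factorial : ℚ) * ((m : ℚ) + 1) ^ j)⁻¹ * PowerSeries.coeff n (L ^ m))
    (A : ℤ → ℤ → ℕ → Polynomial ℚ)
    (hA : ∀ ρ κ : ℤ, PowerSeries.map (Polynomial.C : ℚ →+* Polynomial ℚ)
        (((Lu ^ (-ρ) : (PowerSeries ℚ)ˣ) : PowerSeries ℚ) * G κ) *
        PowerSeries.mk (fun n => ((-1 : ℚ) ^ n / n.factorial) • ascPochhammer ℚ n) =
      PowerSeries.mk (fun n => ((n.factorial : ℚ)⁻¹) • A ρ κ n))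
    (S1 : ℕ → ℕ → ℚ)
    (hS1 : ∀ n : ℕ, descPochhammer ℚ n =
      ∑ l ∈ Finset.range (n + 1), Polynomial.C (S1 n l) * Polynomial.X ^ l)
    (hS1zero : ∀ n l : ℕ, n < l → S1 n l = 0)
    (Eu : (PowerSeries ℚ)ˣ)
    (hEu : (Eu : PowerSeries ℚ) * PowerSeries.X = PowerSeries.exp ℚ - 1)
    (B : ℤ → ℕ → Polynomial ℚ)
    (hB : ∀ α : ℤ, PowerSeries.map (Polynomial.C : ℚ →+* Polynomial ℚ)
        ((Eu ^ (-α) : (PowerSeries ℚ)ˣ) : PowerSeries ℚ) *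
        PowerSeries.mk (fun n => ((n.factorial : ℚ)⁻¹) • (Polynomial.X : Polynomial ℚ) ^ n) =
      PowerSeries.mk (fun n => ((n.factorial : ℚ)⁻¹) • B α n))
    (Cp : ℕ → ℚ)
    (hCp : ∀ m : ℕ, PowerSeries.coeff m (G k) = Cp m / m.factorial) :
    ∀ n : ℕ, A r k n = ∑ j ∈ Finset.range (n + 1),
      Polynomial.C (∑ l ∈ Finset.range (n - j + 1), ∑ a ∈ Finset.range (n - l - j + 1),
        (-1 : ℚ) ^ j * (n.choose (l + j) : ℚ) * ((n - l - j).choose a : ℚ) *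
          S1 (l + j) j * (B ((a : ℤ) - r + 1) a).eval 1 * Cp (n - j - l - a)) *
        Polynomial.X ^ j := by
  intro n
  have hfact : ∀ m : ℕ, ((m.factorial : ℚ)) ≠ 0 := fun m =>
    Nat.cast_ne_zero.2 m.factorial_ne_zero
  have hAe := congrArg (PowerSeries.coeff (R := Polynomial ℚ) n) (hA r k)
  rw [PowerSeries.coeff_mul, PowerSeries.coeff_mk,
    Finset.Nat.sum_antidiagonal_eq_sum_range_succ_mk] at hAe
  simp only [PowerSeries.coeff_map, PowerSeries.coeff_mk] at hAe
  set Bv : ℕ → ℚ := fun a => (B ((a:ℤ) - r + 1) a).eval 1 with hBv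
  set g : ℕ → ℚ := fun i =>
    PowerSeries.coeff (R := ℚ) i (((Lu ^ (-r) : (PowerSeries ℚ)ˣ) : PowerSeries ℚ) * G k) with hgdef
  have KEY : ∀ a : ℕ,
      PowerSeries.coeff (R := ℚ) a ((Lu ^ (-r) : (PowerSeries ℚ)ˣ) : PowerSeries ℚ)
        = (a.factorial:ℚ)⁻¹ * Bv a := by
    intro a
    rw [C7.key1 Eu hEu L hL Lu hLu r a,
      show r - (a:ℤ) - 1 = -((a:ℤ) - r + 1) by ring]
    exact C7.Bval Eu hEu B hB ((a:ℤ) - r + 1) a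
  have hg : ∀ i : ℕ, g i = ∑ a ∈ Finset.range (i+1),
      ((a.factorial:ℚ)⁻¹ * Bv a) * (Cp (i-a) / ((i-a).factorial : ℚ)) := by
    intro i
    rw [hgdef]
    simp only []
    rw [PowerSeries.coeff_mul, Finset.Nat.sum_antidiagonal_eq_sum_range_succ_mk]
    exact Finset.sum_congr rfl fun a _ => by rw [KEY, hCp]
  have hAn : A r k n = (n.factorial : ℚ) • ∑ i ∈ Finset.range (n+1),
      Polynomial.C (g i)
        * (((-1:ℚ)^(n-i) / ((n-i).factorial : ℚ)) • ascPochhammer ℚ (n-i)) := by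
    have h2 : (n.factorial : ℚ) • (((n.factorial : ℚ))⁻¹ • A r k n) = A r k n := by
      rw [smul_smul, mul_inv_cancel₀ (hfact n), one_smul]
    rw [← h2, ← hAe]
  rw [hAn]
  apply Polynomial.ext
  intro t
  rw [Polynomial.coeff_smul, Polynomial.finset_sum_coeff, Polynomial.finset_sum_coeff,
    smul_eq_mul]
  have hterm : ∀ i ∈ Finset.range (n+1),
      (Polynomial.C (g i)
        * (((-1:ℚ)^(n-i) / ((n-i).factorial : ℚ)) • ascPochhammer ℚ (n-i))).coeff t
      = g i * (((-1:ℚ)^(n-i) / ((n-i).factorial : ℚ))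
          * ((-1:ℚ)^((n-i)+t) * S1 (n-i) t)) := by
    intro i _
    rw [Polynomial.coeff_C_mul, Polynomial.coeff_smul,
      C7.asc_coeff S1 hS1 hS1zero (n-i) t, smul_eq_mul]
  rw [Finset.sum_congr rfl hterm]
  have hRterm : ∀ j ∈ Finset.range (n+1),
      (Polynomial.C (∑ l ∈ Finset.range (n - j + 1), ∑ a ∈ Finset.range (n - l - j + 1),
        (-1 : ℚ) ^ j * (n.choose (l + j) : ℚ) * ((n - l - j).choose a : ℚ) *
          S1 (l + j) j * Bv a * Cp (n - j - l - a)) * Polynomial.X ^ j).coeff t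
      = if t = j then (∑ l ∈ Finset.range (n - j + 1), ∑ a ∈ Finset.range (n - l - j + 1),
        (-1 : ℚ) ^ j * (n.choose (l + j) : ℚ) * ((n - l - j).choose a : ℚ) *
          S1 (l + j) j * Bv a * Cp (n - j - l - a)) else 0 := by
    intro j _
    rw [Polynomial.coeff_C_mul, Polynomial.coeff_X_pow]
    split_ifs <;> simp
  rw [Finset.sum_congr rfl hRterm, Finset.sum_ite_eq (Finset.range (n+1)) t]
  by_cases htn : t ≤ n
  · rw [if_pos (Finset.mem_range.2 (by omega))]
    have hrefl := Finset.sum_range_reflect (fun i => g i * (((-1:ℚ)^(n-i)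
        / ((n-i).factorial : ℚ)) * ((-1:ℚ)^((n-i)+t) * S1 (n-i) t))) (n+1)
    simp only [Nat.add_sub_cancel] at hrefl
    rw [← hrefl]
    have hflip : ∀ j ∈ Finset.range (n+1),
        g (n-j) * (((-1:ℚ)^(n-(n-j)) / ((n-(n-j)).factorial : ℚ))
          * ((-1:ℚ)^((n-(n-j))+t) * S1 (n-(n-j)) t))
        = g (n-j) * (((-1:ℚ)^j / (j.factorial : ℚ)) * ((-1:ℚ)^(j+t) * S1 j t)) := by
      intro j hj
      have hj' : n - (n - j) = j := by
        simp only [Finset.mem_range] at hj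
        omega
      rw [hj']
    rw [Finset.sum_congr rfl hflip, Finset.mul_sum]
    rw [show Finset.range (n+1) = Finset.Ico 0 (n+1) by rw [Finset.range_eq_Ico]]
    rw [← Finset.sum_subset (Finset.Ico_subset_Ico (Nat.zero_le t) le_rfl)
      (fun j hj hj2 => by
        have hjt : j < t := by
          simp only [Finset.mem_Ico] at hj hj2
          omega
        rw [hS1zero j t hjt]
        ring)]
    rw [Finset.sum_Ico_eq_sum_range]
    rw [show n + 1 - t = n - t + 1 by omega]
    refine Finset.sum_congr rfl fun l hl => ?_
    have hl' : l ≤ n - t := by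
      simp only [Finset.mem_range] at hl
      omega
    rw [hg (n - (t + l)), show n - (t+l) = n - l - t by omega]
    rw [Finset.sum_mul, Finset.mul_sum]
    refine Finset.sum_congr rfl fun a ha => ?_
    have ha' : a ≤ n - l - t := by
      simp only [Finset.mem_range] at ha
      omega
    rw [show t + l = l + t by omega]
    rw [show Cp (n - t - l - a) = Cp (n - l - t - a) by congr 1; omega]
    rw [Nat.cast_choose ℚ (by omega : l + t ≤ n), Nat.cast_choose ℚ ha',
      show n - (l+t) = n - l - t by omega]
    calc (n.factorial:ℚ) * (((a.factorial:ℚ)⁻¹ * Bv a)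
          * (Cp (n-l-t-a) / (((n-l-t-a)).factorial : ℚ))
          * (((-1:ℚ)^(l+t) / ((l+t).factorial : ℚ)) * ((-1:ℚ)^((l+t)+t) * S1 (l+t) t)))
        = ((-1:ℚ)^(l+t) * (-1:ℚ)^((l+t)+t)) * ((n.factorial:ℚ)
            * (((a.factorial:ℚ)⁻¹ * Bv a)
              * (Cp (n-l-t-a) / (((n-l-t-a)).factorial : ℚ)))
            * (((l+t).factorial : ℚ))⁻¹ * S1 (l+t) t) := by ring
      _ = ((-1:ℚ)^t) * ((n.factorial:ℚ)
            * (((a.factorial:ℚ)⁻¹ * Bv a)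
              * (Cp (n-l-t-a) / (((n-l-t-a)).factorial : ℚ)))
            * (((l+t).factorial : ℚ))⁻¹ * S1 (l+t) t) := by
          rw [C7.neg_one_pow_helper (l+t) t]
      _ = (-1:ℚ)^t * ((n.factorial:ℚ) / (((l+t).factorial:ℚ) * ((n-l-t).factorial:ℚ)))
            * (((n-l-t).factorial:ℚ) / ((a.factorial:ℚ) * ((n-l-t-a).factorial:ℚ)))
            * S1 (l+t) t * Bv a * Cp (n-l-t-a) := by
          field_simp
  · rw [if_neg (by simp only [Finset.mem_range]; omega)]
    rw [Finset.sum_eq_zero, mul_zero]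
    intro i _
    rw [hS1zero (n-i) t (by omega)]
    ring
end

section
/- The Narumi polynomials of order r satisfy N_n^{(r)}(x) = B_n^{(n+r+1)}(x+1) for all n ≥ 0, where B_n^{(α)}(x) are the Bernoulli polynomials of order α. -/
open PowerSeries

namespace Cauchy8

noncomputable section

/-- `E = exp - 1`. -/
def EE : PowerSeries ℚ := PowerSeries.exp ℚ - 1

lemma constantCoeff_EE : constantCoeff EE = 0 := by
  simp [EE, PowerSeries.constantCoeff_exp]

lemma X_dvd_EE : (X : ℚ⟦X⟧) ∣ EE := X_dvd_iff.mpr constantCoeff_EE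

lemma coeff_zero_of_X_pow_dvd {n : ℕ} {f : ℚ⟦X⟧} (h : (X : ℚ⟦X⟧) ^ (n + 1) ∣ f) :
    coeff n f = 0 :=
  X_pow_dvd_iff.mp h n (Nat.lt_succ_self n)

lemma X_pow_dvd_aeval {p : Polynomial ℚ} {k : ℕ} (h : (Polynomial.X : Polynomial ℚ) ^ k ∣ p) :
    (X : ℚ⟦X⟧) ^ k ∣ Polynomial.aeval EE p := by
  obtain ⟨q, rfl⟩ := h
  rw [map_mul, map_pow, Polynomial.aeval_X]
  exact Dvd.dvd.mul_right (pow_dvd_pow_of_dvd X_dvd_EE k) _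

/-- substitution of `EE` into a power series, defined by truncation. -/
def sigmaFun (g : ℚ⟦X⟧) : ℚ⟦X⟧ :=
  mk fun n => coeff n (Polynomial.aeval EE (trunc (n + 1) g))

lemma coeff_sigmaFun (g : ℚ⟦X⟧) (n M : ℕ) (h : n < M) :
    coeff n (sigmaFun g) = coeff n (Polynomial.aeval EE (trunc M g)) := by
  rw [sigmaFun, coeff_mk]
  have hd : (Polynomial.X : Polynomial ℚ) ^ (n + 1) ∣ (trunc M g - trunc (n + 1) g) := by
    rw [Polynomial.X_pow_dvd_iff]
    intro d hd
    rw [Polynomial.coeff_sub, coeff_trunc, coeff_trunc]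
    rw [if_pos (lt_of_lt_of_le hd h), if_pos hd, sub_self]
  have := coeff_zero_of_X_pow_dvd (X_pow_dvd_aeval hd)
  rw [map_sub, map_sub] at this
  linarith [this]

lemma sigmaFun_coe (p : Polynomial ℚ) : sigmaFun (p : ℚ⟦X⟧) = Polynomial.aeval EE p := by
  ext n
  rw [sigmaFun, coeff_mk]
  have hd : (Polynomial.X : Polynomial ℚ) ^ (n + 1) ∣ (p - trunc (n + 1) (p : ℚ⟦X⟧)) := by
    rw [Polynomial.X_pow_dvd_iff]
    intro d hd
    rw [Polynomial.coeff_sub, coeff_trunc, if_pos hd, Polynomial.coeff_coe, sub_self]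
  have := coeff_zero_of_X_pow_dvd (X_pow_dvd_aeval hd)
  rw [map_sub, map_sub] at this
  linarith [this]

lemma sigmaFun_mul (g h : ℚ⟦X⟧) : sigmaFun (g * h) = sigmaFun g * sigmaFun h := by
  ext n
  rw [coeff_sigmaFun _ n (n+1) (Nat.lt_succ_self n), PowerSeries.coeff_mul]
  have hco : ∀ p ∈ Finset.HasAntidiagonal.antidiagonal n,
      coeff p.1 (sigmaFun g) * coeff p.2 (sigmaFun h) =
      coeff p.1 (Polynomial.aeval EE (trunc (n+1) g)) *
        coeff p.2 (Polynomial.aeval EE (trunc (n+1) h)) := by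
    rintro ⟨a, b⟩ hab
    rw [Finset.HasAntidiagonal.mem_antidiagonal] at hab
    rw [coeff_sigmaFun _ a (n+1) (by omega), coeff_sigmaFun _ b (n+1) (by omega)]
  rw [Finset.sum_congr rfl hco, ← PowerSeries.coeff_mul, ← map_mul]
  have hd : (Polynomial.X : Polynomial ℚ) ^ (n + 1) ∣
      (trunc (n+1) (g*h) - trunc (n+1) g * trunc (n+1) h) := by
    rw [Polynomial.X_pow_dvd_iff]
    intro d hdn
    rw [Polynomial.coeff_sub, coeff_trunc, if_pos hdn, Polynomial.coeff_mul,
      PowerSeries.coeff_mul]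
    rw [sub_eq_zero]
    apply Finset.sum_congr rfl
    rintro ⟨a, b⟩ hab
    rw [Finset.HasAntidiagonal.mem_antidiagonal] at hab
    rw [coeff_trunc, coeff_trunc, if_pos (by omega), if_pos (by omega)]
  have := coeff_zero_of_X_pow_dvd (X_pow_dvd_aeval hd)
  rw [map_sub, map_sub] at this
  linarith [this]

lemma sigmaFun_one : sigmaFun 1 = 1 := by
  have : ((1 : ℚ⟦X⟧)) = ((1 : Polynomial ℚ) : ℚ⟦X⟧) := by simp
  rw [this, sigmaFun_coe, map_one]
  exact this

lemma sigmaFun_add (g h : ℚ⟦X⟧) : sigmaFun (g + h) = sigmaFun g + sigmaFun h := by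
  ext n
  rw [map_add, coeff_sigmaFun _ n (n+1) (Nat.lt_succ_self n),
    coeff_sigmaFun g n (n+1) (Nat.lt_succ_self n), coeff_sigmaFun h n (n+1) (Nat.lt_succ_self n),
    map_add, map_add, map_add]

lemma sigmaFun_zero : sigmaFun 0 = 0 := by
  have : ((0 : ℚ⟦X⟧)) = ((0 : Polynomial ℚ) : ℚ⟦X⟧) := by simp
  rw [this, sigmaFun_coe, map_zero]
  exact this

/-- Substitution of `EE` as a ring hom. -/
def sigma : ℚ⟦X⟧ →+* ℚ⟦X⟧ where
  toFun := sigmaFun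
  map_one' := sigmaFun_one
  map_mul' := sigmaFun_mul
  map_zero' := sigmaFun_zero
  map_add' := sigmaFun_add

lemma sigma_coe (p : Polynomial ℚ) : sigma (p : ℚ⟦X⟧) = Polynomial.aeval EE p :=
  sigmaFun_coe p

lemma sigma_X : sigma (X : ℚ⟦X⟧) = EE := by
  have : ((Polynomial.X : Polynomial ℚ) : ℚ⟦X⟧) = X := Polynomial.coe_X
  rw [← this, sigma_coe, Polynomial.aeval_X]

lemma derivative_exp : d⁄dX ℚ (PowerSeries.exp ℚ) = PowerSeries.exp ℚ := by
  ext n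
  rw [PowerSeries.coeff_derivative, PowerSeries.coeff_exp, PowerSeries.coeff_exp]
  simp only [eq_ratCast, Rat.cast_div, Rat.cast_one, Rat.cast_natCast]
  rw [Nat.factorial_succ]
  have h0 : (n.factorial : ℚ) ≠ 0 := by exact_mod_cast n.factorial_ne_zero
  push_cast
  field_simp

variable (Eu : (PowerSeries ℚ)ˣ) (hEu : (Eu : PowerSeries ℚ) * X = PowerSeries.exp ℚ - 1)

include hEu

lemma constantCoeff_Eu : constantCoeff (Eu : ℚ⟦X⟧) = 1 := by
  have h1 := congrArg (coeff 1) hEu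
  rw [PowerSeries.coeff_succ_mul_X 0, map_sub, PowerSeries.coeff_exp] at h1
  simpa using h1

lemma constantCoeff_EuInv : constantCoeff ((Eu⁻¹ : (ℚ⟦X⟧)ˣ) : ℚ⟦X⟧) = 1 := by
  have := congrArg (constantCoeff) Eu.inv_mul
  rw [map_mul, map_one, constantCoeff_Eu Eu hEu] at this
  simpa using this

lemma exp_eq_Eu_add :
    PowerSeries.exp ℚ = (Eu : ℚ⟦X⟧) + X * d⁄dX ℚ (Eu : ℚ⟦X⟧) := by
  have := congrArg (d⁄dX ℚ) hEu
  rw [Derivation.leibniz, map_sub, derivative_exp, Derivation.map_one_eq_zero, sub_zero,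
    PowerSeries.derivative_X] at this
  rw [← this]
  rw [smul_eq_mul, smul_eq_mul, mul_one]

/-- The core "Lagrange" delta lemma: `coeff m ((Eu⁻¹)^(m+1) * exp) = δ_{m,0}`. -/
lemma core_delta (m : ℕ) :
    coeff m (((Eu⁻¹ : (ℚ⟦X⟧)ˣ) : ℚ⟦X⟧) ^ (m + 1) * PowerSeries.exp ℚ) =
      if m = 0 then 1 else 0 := by
  set v : ℚ⟦X⟧ := ((Eu⁻¹ : (ℚ⟦X⟧)ˣ) : ℚ⟦X⟧) with hv
  cases m with
  | zero =>
    simp only [if_pos rfl, zero_add, pow_one]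
    rw [PowerSeries.coeff_zero_eq_constantCoeff, map_mul, constantCoeff_EuInv Eu hEu]
    simp [PowerSeries.constantCoeff_exp]
  | succ k =>
    rw [if_neg (Nat.succ_ne_zero k)]
    -- exp = Eu + X * Eu'
    have hexp := exp_eq_Eu_add Eu hEu
    have hvu : v * (Eu : ℚ⟦X⟧) = 1 := Units.inv_mul Eu
    -- derivative of v^(k+1)
    have hdv : d⁄dX ℚ v = -v ^ 2 • d⁄dX ℚ (Eu : ℚ⟦X⟧) :=
      Derivation.leibniz_of_mul_eq_one _ hvu
    have hdvk : d⁄dX ℚ (v ^ (k + 1)) =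
        -((k + 1 : ℚ⟦X⟧)) * (v ^ (k + 2) * d⁄dX ℚ (Eu : ℚ⟦X⟧)) := by
      rw [Derivation.leibniz_pow, hdv]
      simp only [smul_eq_mul, Nat.add_sub_cancel, nsmul_eq_mul]
      push_cast
      ring
    -- split the product
    have hsplit : v ^ (k + 2) * PowerSeries.exp ℚ =
        v ^ (k + 1) + X * (v ^ (k + 2) * d⁄dX ℚ (Eu : ℚ⟦X⟧)) := by
      rw [hexp]
      have : v ^ (k + 2) * (Eu : ℚ⟦X⟧) = v ^ (k + 1) := by
        rw [pow_succ, mul_assoc, hvu, mul_one]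
      rw [mul_add, this]
      ring
    rw [hsplit, map_add]
    -- second term
    have h2 : coeff (k + 1) (X * (v ^ (k + 2) * d⁄dX ℚ (Eu : ℚ⟦X⟧))) =
        coeff k (v ^ (k + 2) * d⁄dX ℚ (Eu : ℚ⟦X⟧)) := by
      rw [mul_comm, PowerSeries.coeff_succ_mul_X]
    have h3 : (k + 1 : ℚ) * coeff k (v ^ (k + 2) * d⁄dX ℚ (Eu : ℚ⟦X⟧)) =
        -((k + 1 : ℚ) * coeff (k + 1) (v ^ (k + 1))) := by
      have := congrArg (coeff k) hdvk
      rw [PowerSeries.coeff_derivative] at this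
      have hC : coeff k (-((k + 1 : ℚ⟦X⟧)) * (v ^ (k + 2) * d⁄dX ℚ (Eu : ℚ⟦X⟧))) =
          -((k + 1 : ℚ) * coeff k (v ^ (k + 2) * d⁄dX ℚ (Eu : ℚ⟦X⟧))) := by
        rw [neg_mul, map_neg]
        congr 1
        have : ((k + 1 : ℚ⟦X⟧)) = C ((k : ℚ) + 1) := by
          simp [map_add, map_natCast]
        rw [this, PowerSeries.coeff_C_mul]
      rw [hC] at this
      linear_combination this
    have hk1 : (k + 1 : ℚ) ≠ 0 := by positivity
    have key : coeff k (v ^ (k + 2) * d⁄dX ℚ (Eu : ℚ⟦X⟧)) = -coeff (k + 1) (v ^ (k + 1)) := by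
      apply mul_left_cancel₀ hk1
      rw [h3]
      ring
    rw [h2, key]
    ring


omit hEu in
lemma derivative_EE : d⁄dX ℚ EE = PowerSeries.exp ℚ := by
  rw [EE, map_sub, derivative_exp, Derivation.map_one_eq_zero, sub_zero]

/-- Monomial case of the key lemma. -/
lemma coeff_monomial_case (k n : ℕ) :
    coeff n (EE ^ k * (PowerSeries.exp ℚ * ((Eu⁻¹ : (ℚ⟦X⟧)ˣ) : ℚ⟦X⟧) ^ (n + 1))) =
      if n = k then 1 else 0 := by
  set v : ℚ⟦X⟧ := ((Eu⁻¹ : (ℚ⟦X⟧)ˣ) : ℚ⟦X⟧) with hv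
  have hEE : EE = (Eu : ℚ⟦X⟧) * X := hEu.symm
  rcases le_or_gt k n with hk | hk
  · obtain ⟨m, rfl⟩ : ∃ m, n = m + k := ⟨n - k, by omega⟩
    have hsplit : EE ^ k * (PowerSeries.exp ℚ * v ^ (m + k + 1)) =
        X ^ k * (v ^ (m + 1) * PowerSeries.exp ℚ) := by
      rw [hEE, mul_pow]
      have huv : (Eu : ℚ⟦X⟧) ^ k * v ^ k = 1 := by
        rw [hv, ← Units.val_pow_eq_pow_val, ← Units.val_pow_eq_pow_val, ← Units.val_mul,
          ← mul_pow]
        simp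
      calc (Eu : ℚ⟦X⟧) ^ k * X ^ k * (PowerSeries.exp ℚ * v ^ (m + k + 1))
          = X ^ k * (((Eu : ℚ⟦X⟧) ^ k * v ^ k) * (v ^ (m + 1) * PowerSeries.exp ℚ)) := by
            rw [show m + k + 1 = (m + 1) + k by omega, pow_add]
            ring
        _ = X ^ k * (v ^ (m + 1) * PowerSeries.exp ℚ) := by rw [huv, one_mul]
    rw [hsplit, PowerSeries.coeff_X_pow_mul, core_delta Eu hEu m]
    congr 1
    · simp only [eq_iff_iff]
      omega
  · have hdvd : (X : ℚ⟦X⟧) ^ k ∣ EE ^ k * (PowerSeries.exp ℚ * v ^ (n + 1)) :=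
      Dvd.dvd.mul_right (pow_dvd_pow_of_dvd X_dvd_EE k) _
    rw [X_pow_dvd_iff.mp hdvd n hk, if_neg (by omega)]

/-- The key lemma (Lagrange-type coefficient formula). -/
lemma key (g : ℚ⟦X⟧) (n : ℕ) :
    coeff n g =
      coeff n (sigma g * (PowerSeries.exp ℚ * ((Eu⁻¹ : (ℚ⟦X⟧)ˣ) : ℚ⟦X⟧) ^ (n + 1))) := by
  set v : ℚ⟦X⟧ := ((Eu⁻¹ : (ℚ⟦X⟧)ˣ) : ℚ⟦X⟧) with hv
  set w : ℚ⟦X⟧ := PowerSeries.exp ℚ * v ^ (n + 1) with hw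
  -- polynomial case
  have hpoly : ∀ p : Polynomial ℚ, coeff n (p : ℚ⟦X⟧) =
      coeff n (Polynomial.aeval EE p * w) := by
    intro p
    induction p using Polynomial.induction_on' with
    | add p q hp hq =>
      rw [Polynomial.coe_add, map_add, map_add, add_mul, map_add, hp, hq]
    | monomial k a =>
      rw [Polynomial.aeval_monomial, Polynomial.coeff_coe, Polynomial.coeff_monomial]
      have halg : algebraMap ℚ ℚ⟦X⟧ a = C a := rfl
      rw [halg, mul_assoc, PowerSeries.coeff_C_mul, coeff_monomial_case Eu hEu k n]
      by_cases h : n = k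
      · rw [if_pos h, if_pos h.symm, mul_one]
      · rw [if_neg h, if_neg (fun hh => h hh.symm), mul_zero]
  -- decompose g
  obtain ⟨h, hgh⟩ : ∃ h, g = (trunc (n + 1) g : ℚ⟦X⟧) + X ^ (n + 1) * h := by
    have hd : (X : ℚ⟦X⟧) ^ (n + 1) ∣ g - (trunc (n + 1) g : ℚ⟦X⟧) := by
      rw [X_pow_dvd_iff]
      intro m hm
      rw [map_sub, Polynomial.coeff_coe, coeff_trunc, if_pos hm, sub_self]
    obtain ⟨h, hh⟩ := hd
    exact ⟨h, by rw [← hh]; ring⟩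
  rw [hgh]
  have hsig : sigma ((trunc (n + 1) g : ℚ⟦X⟧) + X ^ (n + 1) * h) =
      Polynomial.aeval EE (trunc (n + 1) g) + EE ^ (n + 1) * sigma h := by
    rw [map_add, map_mul, map_pow, sigma_X, sigma_coe]
  rw [map_add, hsig, add_mul, map_add]
  have h1 : coeff n ((X : ℚ⟦X⟧) ^ (n + 1) * h) = 0 :=
    coeff_zero_of_X_pow_dvd (Dvd.dvd.mul_right dvd_rfl h)
  have h2 : coeff n (EE ^ (n + 1) * sigma h * w) = 0 :=
    coeff_zero_of_X_pow_dvd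
      (Dvd.dvd.mul_right (Dvd.dvd.mul_right (pow_dvd_pow_of_dvd X_dvd_EE (n + 1)) _) _)
  rw [h1, h2, add_zero, add_zero, hpoly]

variable (L : PowerSeries ℚ)
    (hL : ∀ n : ℕ, PowerSeries.coeff n L = if n = 0 then 0 else (-1 : ℚ) ^ (n - 1) / n)
    (Lu : (PowerSeries ℚ)ˣ) (hLu : (Lu : PowerSeries ℚ) * X = L)

include hL

omit hEu in
lemma sigma_L : sigma L = X := by
  ext m
  have hrep : coeff m (sigma L) =
      ∑ i ∈ Finset.range (m + 1), coeff i L * coeff m (EE ^ i) := by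
    rw [show sigma L = sigmaFun L from rfl, sigmaFun, coeff_mk,
      Polynomial.aeval_eq_sum_range' (natDegree_trunc_lt L m) EE, map_sum]
    refine Finset.sum_congr rfl fun i hi => ?_
    rw [Finset.mem_range] at hi
    rw [map_smul, coeff_trunc, if_pos hi, smul_eq_mul]
  cases m with
  | zero =>
    rw [hrep]
    simp [hL 0]
  | succ m' =>
    have hm : ((m' + 1 : ℕ) : ℚ) ≠ 0 := by positivity
    apply mul_left_cancel₀ hm
    rw [hrep, Finset.mul_sum]
    have hterm : ∀ i ∈ Finset.range (m' + 1 + 1),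
        ((m' + 1 : ℕ) : ℚ) * (coeff i L * coeff (m' + 1) (EE ^ i)) =
        coeff i L * (i : ℚ) * coeff m' (EE ^ (i - 1) * PowerSeries.exp ℚ) := by
      intro i _
      have hd : coeff m' (d⁄dX ℚ (EE ^ i)) = coeff (m' + 1) (EE ^ i) * (m' + 1) :=
        PowerSeries.coeff_derivative _ _
      have hdp : d⁄dX ℚ (EE ^ i) = (i : ℚ⟦X⟧) * (EE ^ (i - 1) * PowerSeries.exp ℚ) := by
        rw [Derivation.leibniz_pow, derivative_EE]
        rw [smul_eq_mul, nsmul_eq_mul]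
      have hcc : coeff m' ((i : ℚ⟦X⟧) * (EE ^ (i - 1) * PowerSeries.exp ℚ)) =
          (i : ℚ) * coeff m' (EE ^ (i - 1) * PowerSeries.exp ℚ) := by
        rw [← map_natCast C i, PowerSeries.coeff_C_mul]
      rw [hdp, hcc] at hd
      push_cast at hd ⊢
      linear_combination (-(coeff i L)) * hd
    rw [Finset.sum_congr rfl hterm, Finset.sum_range_succ']
    simp only [Nat.cast_zero, mul_zero, zero_mul, add_zero, Nat.add_sub_cancel]
    have hterm2 : ∀ i ∈ Finset.range (m' + 1),
        coeff (i + 1) L * ((i + 1 : ℕ) : ℚ) * coeff m' (EE ^ i * PowerSeries.exp ℚ) =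
        coeff m' ((-EE) ^ i * PowerSeries.exp ℚ) := by
      intro i _
      have hl : coeff (i + 1) L * ((i + 1 : ℕ) : ℚ) = (-1 : ℚ) ^ i := by
        rw [hL (i + 1), if_neg (Nat.succ_ne_zero i), Nat.add_sub_cancel]
        have : ((i + 1 : ℕ) : ℚ) ≠ 0 := by positivity
        field_simp
      have hC : ((-EE) ^ i * PowerSeries.exp ℚ) =
          C ((-1 : ℚ) ^ i) * (EE ^ i * PowerSeries.exp ℚ) := by
        rw [neg_pow]
        have : ((-1 : ℚ⟦X⟧)) ^ i = C ((-1 : ℚ) ^ i) := by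
          rw [map_pow, map_neg, map_one]
        rw [this, mul_assoc]
      rw [hC, PowerSeries.coeff_C_mul, hl]
    rw [Finset.sum_congr rfl hterm2, ← map_sum, ← Finset.sum_mul]
    have hgeom : (∑ i ∈ Finset.range (m' + 1), (-EE) ^ i) * PowerSeries.exp ℚ =
        1 - (-EE) ^ (m' + 1) := by
      have h1 : PowerSeries.exp ℚ = -((-EE) - 1) := by rw [EE]; ring
      rw [h1, mul_neg, geom_sum_mul, neg_sub]
    rw [hgeom, map_sub]
    have h0 : coeff m' ((-EE) ^ (m' + 1)) = 0 :=
      coeff_zero_of_X_pow_dvd (pow_dvd_pow_of_dvd (dvd_neg.mpr X_dvd_EE) (m' + 1))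
    rw [h0, sub_zero, PowerSeries.coeff_one, PowerSeries.coeff_X]
    rcases Nat.eq_zero_or_pos m' with h | h
    · subst h; norm_num
    · rw [if_neg (by omega), if_neg (by omega)]
      ring

include hLu hEu

lemma units_map_sigma_Lu : Units.map (sigma : ℚ⟦X⟧ →+* ℚ⟦X⟧).toMonoidHom Lu = Eu⁻¹ := by
  set U := Units.map (sigma : ℚ⟦X⟧ →+* ℚ⟦X⟧).toMonoidHom Lu with hU
  have hEE : (Eu : ℚ⟦X⟧) * X = EE := hEu
  have h1 : (U : ℚ⟦X⟧) * EE = X := by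
    have : sigma ((Lu : ℚ⟦X⟧) * X) = sigma L := by rw [hLu]
    rw [map_mul, sigma_X, sigma_L L hL] at this
    exact this
  have h3 : (U : ℚ⟦X⟧) * (Eu : ℚ⟦X⟧) = 1 := by
    apply mul_right_cancel₀ (PowerSeries.X_ne_zero (R := ℚ))
    rw [mul_assoc, hEE, h1, one_mul]
  have h4 : U * Eu = 1 := by
    ext
    rw [Units.val_mul, h3, Units.val_one]
  exact eq_inv_of_mul_eq_one_left h4

lemma sigma_Lu_zpow (r : ℤ) :
    sigma ((Lu ^ r : (ℚ⟦X⟧)ˣ) : ℚ⟦X⟧) = ((Eu ^ (-r) : (ℚ⟦X⟧)ˣ) : ℚ⟦X⟧) := by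
  have h1 : sigma ((Lu ^ r : (ℚ⟦X⟧)ˣ) : ℚ⟦X⟧) =
      (↑(Units.map (sigma : ℚ⟦X⟧ →+* ℚ⟦X⟧).toMonoidHom (Lu ^ r)) : ℚ⟦X⟧) := rfl
  rw [h1, map_zpow, units_map_sigma_Lu Eu hEu L hL Lu hLu, zpow_neg, inv_zpow]

/-- The main coefficient identity. -/
lemma star (r : ℤ) (n m : ℕ) :
    coeff n (((Lu ^ r : (ℚ⟦X⟧)ˣ) : ℚ⟦X⟧) * (1 + X) ^ m) =
    coeff n (((Eu ^ (-((n : ℤ) + r + 1)) : (ℚ⟦X⟧)ˣ) : ℚ⟦X⟧) * PowerSeries.exp ℚ ^ (m + 1)) := by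
  rw [key Eu hEu (((Lu ^ r : (ℚ⟦X⟧)ˣ) : ℚ⟦X⟧) * (1 + X) ^ m) n]
  have hs1 : sigma (1 + X : ℚ⟦X⟧) = PowerSeries.exp ℚ := by
    rw [map_add, map_one, sigma_X, EE]
    ring
  have hsg : sigma (((Lu ^ r : (ℚ⟦X⟧)ˣ) : ℚ⟦X⟧) * (1 + X) ^ m) =
      ((Eu ^ (-r) : (ℚ⟦X⟧)ˣ) : ℚ⟦X⟧) * PowerSeries.exp ℚ ^ m := by
    rw [map_mul, map_pow, hs1, sigma_Lu_zpow Eu hEu L hL Lu hLu]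
  rw [hsg]
  congr 1
  have hu : ((Eu ^ (-r) : (ℚ⟦X⟧)ˣ) : ℚ⟦X⟧) * ((Eu⁻¹ : (ℚ⟦X⟧)ˣ) : ℚ⟦X⟧) ^ (n + 1) =
      ((Eu ^ (-((n : ℤ) + r + 1)) : (ℚ⟦X⟧)ˣ) : ℚ⟦X⟧) := by
    rw [← Units.val_pow_eq_pow_val, ← Units.val_mul]
    congr 1
    rw [← zpow_natCast (Eu⁻¹) (n + 1), inv_zpow, ← zpow_neg, ← zpow_add]
    congr 1
    push_cast
    ring
  calc ((Eu ^ (-r) : (ℚ⟦X⟧)ˣ) : ℚ⟦X⟧) * PowerSeries.exp ℚ ^ m *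
        (PowerSeries.exp ℚ * ((Eu⁻¹ : (ℚ⟦X⟧)ˣ) : ℚ⟦X⟧) ^ (n + 1))
      = (((Eu ^ (-r) : (ℚ⟦X⟧)ˣ) : ℚ⟦X⟧) * ((Eu⁻¹ : (ℚ⟦X⟧)ˣ) : ℚ⟦X⟧) ^ (n + 1)) *
        (PowerSeries.exp ℚ ^ m * PowerSeries.exp ℚ) := by ring
    _ = ((Eu ^ (-((n : ℤ) + r + 1)) : (ℚ⟦X⟧)ˣ) : ℚ⟦X⟧) * PowerSeries.exp ℚ ^ (m + 1) := by
        rw [hu, pow_succ]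


omit hEu hL hLu in
lemma map_mk (φ : Polynomial ℚ →+* ℚ) (f : ℕ → Polynomial ℚ) :
    PowerSeries.map φ (mk f) = mk fun k => φ (f k) := by
  ext k
  rw [PowerSeries.coeff_map, coeff_mk, coeff_mk]

omit hEu hL hLu in
lemma map_map' (φ : Polynomial ℚ →+* ℚ) (g : ℚ⟦X⟧) :
    PowerSeries.map φ (PowerSeries.map (Polynomial.C : ℚ →+* Polynomial ℚ) g) =
      PowerSeries.map (φ.comp (Polynomial.C : ℚ →+* Polynomial ℚ)) g := by
  ext k
  rw [PowerSeries.coeff_map, PowerSeries.coeff_map, PowerSeries.coeff_map, RingHom.comp_apply]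

omit hEu hL hLu in
lemma map_eval_C (x : ℚ) (g : ℚ⟦X⟧) :
    PowerSeries.map ((Polynomial.evalRingHom x).comp (Polynomial.C : ℚ →+* Polynomial ℚ)) g
      = g := by
  have : (Polynomial.evalRingHom x).comp (Polynomial.C : ℚ →+* Polynomial ℚ) =
      RingHom.id ℚ := by
    ext c
    simp
  rw [this, PowerSeries.map_id, id_eq]

omit hEu hL hLu in
lemma coe_one_add_X_pow (m k : ℕ) :
    coeff k ((1 + X : ℚ⟦X⟧) ^ m) = (m.choose k : ℚ) := by
  have h1 : ((1 + Polynomial.X : Polynomial ℚ) : ℚ⟦X⟧) = 1 + X := by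
    rw [Polynomial.coe_add, Polynomial.coe_one, Polynomial.coe_X]
  rw [← h1, ← Polynomial.coe_pow, Polynomial.coeff_coe, Polynomial.coeff_one_add_X_pow]

omit hEu hL hLu in
lemma binom_series (m : ℕ) :
    (mk fun k => ((k.factorial : ℚ))⁻¹ * (descPochhammer ℚ k).eval ((m : ℚ))) =
      (1 + X : ℚ⟦X⟧) ^ m := by
  ext k
  rw [coeff_mk, coe_one_add_X_pow m k, descPochhammer_eval_eq_descFactorial ℚ m k,
    Nat.descFactorial_eq_factorial_mul_choose]
  have hk : ((k.factorial : ℚ)) ≠ 0 := by exact_mod_cast k.factorial_ne_zero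
  push_cast
  field_simp

omit hEu hL hLu in
lemma exp_series (m : ℕ) :
    (mk fun k => ((k.factorial : ℚ))⁻¹ * ((m : ℚ) + 1) ^ k) =
      PowerSeries.exp ℚ ^ (m + 1) := by
  ext k
  rw [coeff_mk, PowerSeries.exp_pow_eq_rescale_exp, PowerSeries.coeff_rescale,
    PowerSeries.coeff_exp]
  simp only [eq_ratCast, Rat.cast_div, Rat.cast_one, Rat.cast_natCast]
  push_cast
  rw [one_div, mul_comm]


omit hEu hL in
omit hLu in
lemma Nside (r : ℤ) (N : ℕ → Polynomial ℚ)
    (hN : PowerSeries.map (Polynomial.C : ℚ →+* Polynomial ℚ)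
        ((Lu ^ r : (PowerSeries ℚ)ˣ) : PowerSeries ℚ) *
        PowerSeries.mk (fun n => ((n.factorial : ℚ)⁻¹) • descPochhammer ℚ n) =
      PowerSeries.mk (fun n => ((n.factorial : ℚ)⁻¹) • N n)) (m : ℕ) :
    ((Lu ^ r : (ℚ⟦X⟧)ˣ) : ℚ⟦X⟧) * (1 + X : ℚ⟦X⟧) ^ m =
      mk fun k => ((k.factorial : ℚ))⁻¹ * (N k).eval ((m : ℚ)) := by
  have h := congrArg (PowerSeries.map (Polynomial.evalRingHom ((m : ℚ)))) hN
  rw [map_mul, map_map', map_eval_C, map_mk, map_mk] at h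
  have hb : (mk fun k => Polynomial.evalRingHom ((m : ℚ))
      (((k.factorial : ℚ))⁻¹ • descPochhammer ℚ k)) = (1 + X : ℚ⟦X⟧) ^ m := by
    rw [← binom_series m]
    ext k
    rw [coeff_mk, coeff_mk, Polynomial.smul_eq_C_mul]
    simp
  have hn' : (mk fun k => Polynomial.evalRingHom ((m : ℚ)) (((k.factorial : ℚ))⁻¹ • N k)) =
      mk fun k => ((k.factorial : ℚ))⁻¹ * (N k).eval ((m : ℚ)) := by
    ext k
    rw [coeff_mk, coeff_mk, Polynomial.smul_eq_C_mul]
    simp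
  rw [hb, hn'] at h
  exact h

omit hEu hL hLu in
lemma Bside (α : ℤ) (B : ℤ → ℕ → Polynomial ℚ)
    (hB : ∀ α : ℤ, PowerSeries.map (Polynomial.C : ℚ →+* Polynomial ℚ)
        ((Eu ^ (-α) : (PowerSeries ℚ)ˣ) : PowerSeries ℚ) *
        PowerSeries.mk (fun n => ((n.factorial : ℚ)⁻¹) • (Polynomial.X : Polynomial ℚ) ^ n) =
      PowerSeries.mk (fun n => ((n.factorial : ℚ)⁻¹) • B α n)) (m : ℕ) :
    ((Eu ^ (-α) : (ℚ⟦X⟧)ˣ) : ℚ⟦X⟧) * PowerSeries.exp ℚ ^ (m + 1) =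
      mk fun k => ((k.factorial : ℚ))⁻¹ * (B α k).eval ((m : ℚ) + 1) := by
  have h := congrArg (PowerSeries.map (Polynomial.evalRingHom ((m : ℚ) + 1))) (hB α)
  rw [map_mul, map_map', map_eval_C, map_mk, map_mk] at h
  have hb : (mk fun k => Polynomial.evalRingHom ((m : ℚ) + 1)
      (((k.factorial : ℚ))⁻¹ • (Polynomial.X : Polynomial ℚ) ^ k)) =
      PowerSeries.exp ℚ ^ (m + 1) := by
    rw [← exp_series m]
    ext k
    rw [coeff_mk, coeff_mk, Polynomial.smul_eq_C_mul]
    simp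
  have hn' : (mk fun k => Polynomial.evalRingHom ((m : ℚ) + 1) (((k.factorial : ℚ))⁻¹ • B α k)) =
      mk fun k => ((k.factorial : ℚ))⁻¹ * (B α k).eval ((m : ℚ) + 1) := by
    ext k
    rw [coeff_mk, coeff_mk, Polynomial.smul_eq_C_mul]
    simp
  rw [hb, hn'] at h
  exact h

-- checkpoint

end

end Cauchy8

/-- the Narumi polynomials of order `r`, defined by
`(log(1+t)/t)^r (1+t)^x = Σ_n Nₙ^{(r)}(x) tⁿ/n!`, satisfy
`Nₙ^{(r)}(x) = Bₙ^{(n+r+1)}(x+1)` for all `n ≥ 0`. -/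
theorem cauchy_stmt8
    (r : ℤ)
    (L : PowerSeries ℚ)
    (hL : ∀ n : ℕ, PowerSeries.coeff n L = if n = 0 then 0 else (-1 : ℚ) ^ (n - 1) / n)
    (Lu : (PowerSeries ℚ)ˣ)
    (hLu : (Lu : PowerSeries ℚ) * PowerSeries.X = L)
    (Eu : (PowerSeries ℚ)ˣ)
    (hEu : (Eu : PowerSeries ℚ) * PowerSeries.X = PowerSeries.exp ℚ - 1)
    (B : ℤ → ℕ → Polynomial ℚ)
    (hB : ∀ α : ℤ, PowerSeries.map (Polynomial.C : ℚ →+* Polynomial ℚ)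
        ((Eu ^ (-α) : (PowerSeries ℚ)ˣ) : PowerSeries ℚ) *
        PowerSeries.mk (fun n => ((n.factorial : ℚ)⁻¹) • (Polynomial.X : Polynomial ℚ) ^ n) =
      PowerSeries.mk (fun n => ((n.factorial : ℚ)⁻¹) • B α n))
    (N : ℕ → Polynomial ℚ)
    (hN : PowerSeries.map (Polynomial.C : ℚ →+* Polynomial ℚ)
        ((Lu ^ r : (PowerSeries ℚ)ˣ) : PowerSeries ℚ) *
        PowerSeries.mk (fun n => ((n.factorial : ℚ)⁻¹) • descPochhammer ℚ n) =
      PowerSeries.mk (fun n => ((n.factorial : ℚ)⁻¹) • N n)) :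
    ∀ n : ℕ, N n = (B ((n : ℤ) + r + 1) n).comp (Polynomial.X + 1) := by
  intro n
  have heval : ∀ m : ℕ,
      (N n).eval ((m : ℚ)) = (B ((n : ℤ) + r + 1) n).eval ((m : ℚ) + 1) := by
    intro m
    have h1 := congrArg (PowerSeries.coeff n) (Cauchy8.Nside Lu r N hN m)
    have h2 := congrArg (PowerSeries.coeff n)
      (Cauchy8.Bside Eu ((n : ℤ) + r + 1) B hB m)
    rw [PowerSeries.coeff_mk] at h1 h2
    have h3 := Cauchy8.star Eu hEu L hL Lu hLu r n m
    rw [h1, h2] at h3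
    have hfn : ((n.factorial : ℚ))⁻¹ ≠ 0 := by
      have : ((n.factorial : ℚ)) ≠ 0 := by exact_mod_cast n.factorial_ne_zero
      exact inv_ne_zero this
    exact mul_left_cancel₀ hfn h3
  have hzero : N n - (B ((n : ℤ) + r + 1) n).comp (Polynomial.X + 1) = 0 := by
    apply Polynomial.eq_zero_of_infinite_isRoot
    apply Set.infinite_of_injective_forall_mem (f := (Nat.cast : ℕ → ℚ)) Nat.cast_injective
    intro m
    simp only [Set.mem_setOf_eq, Polynomial.IsRoot, Polynomial.eval_sub, Polynomial.eval_comp,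
      Polynomial.eval_add, Polynomial.eval_X, Polynomial.eval_one]
    rw [heval m]
    ring
  exact sub_eq_zero.mp hzero
end

section
/- For all n ≥ 1 and integers r ≥ 0, k, the derivative of A_n^{(r,k)}(x) satisfies d/dx A_n^{(r,k)}(x) = (-1)^{n+1} · n! · Σ_{l=0}^{n-1} ((-1)^{l+1} / ((n-l)·l!)) · A_l^{(r,k)}(x). -/
open Polynomial Finset

noncomputable def Dps (f : PowerSeries (Polynomial ℚ)) : PowerSeries (Polynomial ℚ) :=
  PowerSeries.mk fun n => Polynomial.derivative (PowerSeries.coeff n f)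

lemma coeff_Dps (n : ℕ) (f : PowerSeries (Polynomial ℚ)) :
    PowerSeries.coeff n (Dps f) = Polynomial.derivative (PowerSeries.coeff n f) :=
  PowerSeries.coeff_mk _ _

lemma Dps_mapC_mul (g : PowerSeries ℚ) (f : PowerSeries ℚ[X]) :
    Dps (PowerSeries.map C g * f) = PowerSeries.map C g * Dps f := by
  ext n
  simp only [coeff_Dps, PowerSeries.coeff_mul, PowerSeries.coeff_map, map_sum,
    derivative_C_mul]


lemma asc_deriv (n : ℕ) : derivative (ascPochhammer ℚ n) =
    ∑ l ∈ range n, ((n.factorial : ℚ) / (((n - l : ℕ) : ℚ) * l.factorial)) • ascPochhammer ℚ l := by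
  induction n with
  | zero => simp
  | succ n ih =>
    rw [ascPochhammer_succ_right, derivative_mul, ih]
    have hX : (derivative (X + (n : ℚ[X]))) = 1 := by simp
    rw [hX, mul_one]
    have hsplit : ∀ l : ℕ, l < n → ascPochhammer ℚ l * (X + (n : ℚ[X])) =
        ascPochhammer ℚ (l + 1) + ((n - l : ℕ) : ℚ) • ascPochhammer ℚ l := by
      intro l hl
      rw [ascPochhammer_succ_right]
      have : (X + (n : ℚ[X])) = (X + (l : ℚ[X])) + C ((n - l : ℕ) : ℚ) := by
        rw [Nat.cast_sub hl.le, map_sub, map_natCast, map_natCast]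
        ring
      rw [this, mul_add, smul_eq_C_mul, mul_comm (C _)]
    rw [Finset.sum_mul]
    have step1 : ∑ l ∈ range n, ((n.factorial : ℚ) / (((n - l : ℕ) : ℚ) * l.factorial)) • ascPochhammer ℚ l * (X + (n : ℚ[X]))
        = ∑ l ∈ range n, (((n.factorial : ℚ) / (((n - l : ℕ) : ℚ) * l.factorial)) • ascPochhammer ℚ (l + 1)
          + ((n.factorial : ℚ) / (l.factorial : ℚ)) • ascPochhammer ℚ l) := by
      refine Finset.sum_congr rfl fun l hl => ?_
      rw [smul_mul_assoc, hsplit l (mem_range.mp hl), smul_add, smul_smul]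
      congr 2
      have h1 : ((n - l : ℕ) : ℚ) ≠ 0 := by
        have := Nat.sub_pos_of_lt (mem_range.mp hl)
        positivity
      field_simp
    rw [step1, Finset.sum_add_distrib]
    -- S1 as a sum over range (n+1)
    have hS1 : ∑ l ∈ range n, ((n.factorial : ℚ) / (((n - l : ℕ) : ℚ) * l.factorial)) • ascPochhammer ℚ (l + 1)
        = ∑ j ∈ range (n + 1),
            (if j = 0 then (0:ℚ) else (n.factorial : ℚ) / (((n - (j-1) : ℕ) : ℚ) * (j-1).factorial)) • ascPochhammer ℚ j := by
      rw [Finset.sum_range_succ']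
      simp
    have hS2 : ∑ l ∈ range n, ((n.factorial : ℚ) / (l.factorial : ℚ)) • ascPochhammer ℚ l + ascPochhammer ℚ n
        = ∑ j ∈ range (n + 1), ((n.factorial : ℚ) / (j.factorial : ℚ)) • ascPochhammer ℚ j := by
      rw [Finset.sum_range_succ]
      congr 1
      rw [div_self (by exact_mod_cast n.factorial_ne_zero), one_smul]
    rw [add_assoc, hS1, hS2, ← Finset.sum_add_distrib]
    refine Finset.sum_congr rfl fun j hj => ?_
    rw [← add_smul]
    congr 1
    have hj' : j ≤ n := by simpa [Nat.lt_succ_iff] using hj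
    rcases Nat.eq_zero_or_pos j with h0 | hpos
    · subst h0
      simp only [if_pos rfl, zero_add, Nat.factorial_zero, Nat.cast_one, mul_one]
      have h2 : n + 1 - 0 = n + 1 := rfl
      rw [h2, Nat.factorial_succ]
      have hn1 : ((n:ℚ)+1) ≠ 0 := by positivity
      push_cast
      field_simp
      ring
    · obtain ⟨i, rfl⟩ := Nat.exists_eq_add_of_lt hpos
      simp only [Nat.zero_add] at *
      have hin : i < n := by omega
      simp only [if_neg (Nat.succ_ne_zero i), Nat.add_sub_cancel]
      have e1 : n + 1 - (i + 1) = n - i := by omega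
      rw [e1, Nat.factorial_succ (n), Nat.factorial_succ i]
      have hni : ((n - i : ℕ) : ℚ) ≠ 0 := by
        have := Nat.sub_pos_of_lt hin
        positivity
      have hif : ((i.factorial : ℚ)) ≠ 0 := by exact_mod_cast i.factorial_ne_zero
      push_cast
      set c : ℚ := ((n - i : ℕ) : ℚ) with hc
      set f : ℚ := (i.factorial : ℚ) with hf
      have hi1 : ((i:ℚ) + 1) ≠ 0 := by positivity
      field_simp
      rw [hc, Nat.cast_sub hin.le]
      ring

lemma Dps_P (L : PowerSeries ℚ)
    (hL : ∀ n : ℕ, PowerSeries.coeff n L = if n = 0 then 0 else (-1 : ℚ) ^ (n - 1) / n) :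
    Dps (PowerSeries.mk (fun n => ((-1 : ℚ) ^ n / n.factorial) • ascPochhammer ℚ n)) =
      -(PowerSeries.map C L) *
        PowerSeries.mk (fun n => ((-1 : ℚ) ^ n / n.factorial) • ascPochhammer ℚ n) := by
  ext n : 1
  rw [coeff_Dps, PowerSeries.coeff_mk, derivative_smul, asc_deriv, Finset.smul_sum]
  rw [neg_mul, map_neg, PowerSeries.coeff_mul, Finset.Nat.sum_antidiagonal_eq_sum_range_succ_mk,
    Finset.sum_range_succ']
  simp only [PowerSeries.coeff_map, PowerSeries.coeff_mk, hL 0, if_pos rfl, if_true, map_zero, zero_mul,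
    add_zero]
  rw [← Finset.sum_neg_distrib, ← Finset.sum_range_reflect
    (fun l => ((-1 : ℚ) ^ n / n.factorial) • (((n.factorial : ℚ) / (((n - l : ℕ) : ℚ) * l.factorial)) • ascPochhammer ℚ l)) n]
  refine Finset.sum_congr rfl fun j hj => ?_
  have hjn : j < n := mem_range.mp hj
  have hl1 : n - (j + 1) = n - 1 - j := by omega
  have hl2 : n - (n - 1 - j) = j + 1 := by omega
  rw [hl1, hl2, hL (j + 1)]
  simp only [Nat.succ_ne_zero, if_neg, Nat.add_sub_cancel]
  set l := n - 1 - j with hldef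
  rw [← Polynomial.smul_eq_C_mul, smul_smul, smul_smul, ← neg_smul]
  congr 1
  have hn0 : (n.factorial : ℚ) ≠ 0 := by exact_mod_cast n.factorial_ne_zero
  have hl0 : (l.factorial : ℚ) ≠ 0 := by exact_mod_cast l.factorial_ne_zero
  have hj0 : ((j : ℚ) + 1) ≠ 0 := by positivity
  have hnexp : n = j + l + 1 := by omega
  push_cast
  rw [hnexp, pow_add, pow_add]
  field_simp

/-- for all `n ≥ 1` and integers `r ≥ 0`, `k`,
`d/dx Aₙ^{(r,k)}(x) = (-1)^{n+1} n! Σ_{l=0}^{n-1} ((-1)^{l+1}/((n-l)l!)) A_l^{(r,k)}(x)`. -/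
theorem cauchy_stmt9
    (r : ℕ) (k : ℤ)
    (L : PowerSeries ℚ)
    (hL : ∀ n : ℕ, PowerSeries.coeff n L = if n = 0 then 0 else (-1 : ℚ) ^ (n - 1) / n)
    (Lu : (PowerSeries ℚ)ˣ)
    (hLu : (Lu : PowerSeries ℚ) * PowerSeries.X = L)
    (G : ℤ → PowerSeries ℚ)
    (hG : ∀ (j : ℤ) (n : ℕ), PowerSeries.coeff n (G j) =
      ∑ m ∈ Finset.range (n + 1),
        ((m.factorial : ℚ) * ((m : ℚ) + 1) ^ j)⁻¹ * PowerSeries.coeff n (L ^ m))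
    (A : ℤ → ℤ → ℕ → Polynomial ℚ)
    (hA : ∀ ρ κ : ℤ, PowerSeries.map (Polynomial.C : ℚ →+* Polynomial ℚ)
        (((Lu ^ (-ρ) : (PowerSeries ℚ)ˣ) : PowerSeries ℚ) * G κ) *
        PowerSeries.mk (fun n => ((-1 : ℚ) ^ n / n.factorial) • ascPochhammer ℚ n) =
      PowerSeries.mk (fun n => ((n.factorial : ℚ)⁻¹) • A ρ κ n))
    :
    ∀ n : ℕ, 1 ≤ n →
      Polynomial.derivative (A (r : ℤ) k n) =
        ((-1 : ℚ) ^ (n + 1) * n.factorial) • ∑ l ∈ Finset.range n,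
          ((-1 : ℚ) ^ (l + 1) / (((n - l : ℕ) : ℚ) * l.factorial)) • A (r : ℤ) k l := by
  intro n hn
  have h1 := hA (r : ℤ) k
  set Fg : PowerSeries ℚ := ((Lu ^ (-(r:ℤ)) : (PowerSeries ℚ)ˣ) : PowerSeries ℚ) * G k with hFg
  have hmain : PowerSeries.mk (fun m => ((m.factorial : ℚ)⁻¹) • Polynomial.derivative (A (r:ℤ) k m)) =
      -(PowerSeries.map C L) * PowerSeries.mk (fun m => ((m.factorial : ℚ)⁻¹) • A (r:ℤ) k m) := by
    have e1 : PowerSeries.mk (fun m => ((m.factorial : ℚ)⁻¹) • Polynomial.derivative (A (r:ℤ) k m)) =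
        Dps (PowerSeries.mk fun m => ((m.factorial : ℚ)⁻¹) • A (r:ℤ) k m) := by
      ext m : 1
      rw [coeff_Dps, PowerSeries.coeff_mk, PowerSeries.coeff_mk, derivative_smul]
    rw [e1, ← h1, Dps_mapC_mul, Dps_P L hL]
    ring
  have h2 := congrArg (PowerSeries.coeff n) hmain
  rw [PowerSeries.coeff_mk, neg_mul, map_neg, PowerSeries.coeff_mul,
    Finset.Nat.sum_antidiagonal_eq_sum_range_succ_mk, Finset.sum_range_succ'] at h2
  simp only [PowerSeries.coeff_map, PowerSeries.coeff_mk, hL 0, if_pos rfl, if_true, map_zero,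
    zero_mul, add_zero] at h2
  have hn0 : (n.factorial : ℚ) ≠ 0 := by exact_mod_cast n.factorial_ne_zero
  have h5 : Polynomial.derivative (A (r:ℤ) k n) = (n.factorial : ℚ) •
      (-∑ j ∈ Finset.range n, C (PowerSeries.coeff (j + 1) L) *
        ((((n - (j + 1)).factorial : ℚ))⁻¹ • A (r:ℤ) k (n - (j + 1)))) := by
    rw [← h2, smul_smul, mul_inv_cancel₀ hn0, one_smul]
  rw [h5, ← Finset.sum_neg_distrib, Finset.smul_sum, Finset.smul_sum,
    ← Finset.sum_range_reflect
    (fun l => ((-1 : ℚ) ^ (n + 1) * n.factorial) •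
      (((-1 : ℚ) ^ (l + 1) / (((n - l : ℕ) : ℚ) * l.factorial)) • A (r:ℤ) k l)) n]
  refine Finset.sum_congr rfl fun j hj => ?_
  have hjn : j < n := Finset.mem_range.mp hj
  have hl1 : n - (j + 1) = n - 1 - j := by omega
  have hl2 : n - (n - 1 - j) = j + 1 := by omega
  rw [hl1, hl2, hL (j + 1)]
  simp only [Nat.succ_ne_zero, if_neg, Nat.add_sub_cancel]
  set l := n - 1 - j with hldef
  simp only [← Polynomial.smul_eq_C_mul, smul_smul, smul_neg, neg_smul, ← neg_smul]
  congr 1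
  have hl0 : (l.factorial : ℚ) ≠ 0 := by exact_mod_cast l.factorial_ne_zero
  have hj0 : ((j : ℚ) + 1) ≠ 0 := by positivity
  have hnexp : n + 1 = (j + 1) + (l + 1) := by omega
  push_cast
  rw [hnexp, pow_add]
  field_simp
  have hsq : ((-1 : ℚ)) ^ (l + 1) * ((-1 : ℚ)) ^ (l + 1) = 1 := by
    rw [← pow_add]
    exact Even.neg_one_pow ⟨l + 1, by ring⟩
  linear_combination ((-1 : ℚ) ^ j) * hsq
end

section
/- For all n ≥ 0, s ≥ 0 and integers r, k, A_n^{(r,k)}(x) = Σ_{m=0}^n [ (-1)^m Σ_{l=0}^{n-m} C(n,l) · S₁(n-l, m) · A_l^{(r+s,k)}(s) ] · B_m^{(s)}(x), where B_m^{(s)}(x) is the Bernoulli polynomial of order s. -/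
open PowerSeries Finset

namespace CS10

variable {R : Type*} [CommRing R]

lemma coeff_pow_zero (a : PowerSeries R) (h : constantCoeff a = 0)
    {m i : ℕ} (hi : i < m) : PowerSeries.coeff i (a ^ m) = 0 := by
  have hX : (X : PowerSeries R) ^ m ∣ a ^ m :=
    pow_dvd_pow_of_dvd (PowerSeries.X_dvd_iff.mpr h) m
  exact PowerSeries.X_pow_dvd_iff.mp hX i hi

lemma coeff_aeval_zero (a : PowerSeries R) (h : constantCoeff a = 0)
    {n : ℕ} {p : Polynomial R} (hp : ∀ i ≤ n, p.coeff i = 0) :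
    PowerSeries.coeff n (Polynomial.aeval a p) = 0 := by
  obtain ⟨q, rfl⟩ : (Polynomial.X : Polynomial R) ^ (n + 1) ∣ p :=
    Polynomial.X_pow_dvd_iff.mpr (fun d hd => hp d (Nat.lt_succ_iff.mp hd))
  rw [map_mul, map_pow, Polynomial.aeval_X]
  have hX : (X : PowerSeries R) ^ (n + 1) ∣ a ^ (n + 1) * Polynomial.aeval a q :=
    dvd_mul_of_dvd_left (pow_dvd_pow_of_dvd (PowerSeries.X_dvd_iff.mpr h) _) _
  exact PowerSeries.X_pow_dvd_iff.mp hX n (Nat.lt_succ_self n)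

lemma coeff_aeval_congr (a : PowerSeries R) (h : constantCoeff a = 0)
    {n : ℕ} {p q : Polynomial R} (hpq : ∀ i ≤ n, p.coeff i = q.coeff i) :
    PowerSeries.coeff n (Polynomial.aeval a p) =
      PowerSeries.coeff n (Polynomial.aeval a q) := by
  have := coeff_aeval_zero a h (n := n) (p := p - q)
    (fun i hi => by simp [hpq i hi])
  rw [map_sub, map_sub] at this
  exact sub_eq_zero.mp this

noncomputable def pcomp (a f : PowerSeries R) : PowerSeries R :=
  PowerSeries.mk fun n => PowerSeries.coeff n (Polynomial.aeval a (trunc (n + 1) f))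

lemma coeff_pcomp_trunc (a : PowerSeries R) (h : constantCoeff a = 0)
    (f : PowerSeries R) {n N : ℕ} (hn : n < N) :
    PowerSeries.coeff n (pcomp a f) =
      PowerSeries.coeff n (Polynomial.aeval a (trunc N f)) := by
  rw [pcomp, coeff_mk]
  exact coeff_aeval_congr a h (fun i hi => by
    rw [coeff_trunc, coeff_trunc, if_pos (Nat.lt_succ_iff.mpr hi), if_pos (lt_of_le_of_lt hi hn)])

lemma coeff_pcomp (a f : PowerSeries R) (n : ℕ) :
    PowerSeries.coeff n (pcomp a f) =
      ∑ m ∈ range (n + 1), PowerSeries.coeff m f * PowerSeries.coeff n (a ^ m) := by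
  rw [pcomp, coeff_mk, PowerSeries.trunc_apply, ← Finset.range_eq_Ico, map_sum, map_sum]
  refine Finset.sum_congr rfl fun m _ => ?_
  rw [Polynomial.aeval_monomial, ← Algebra.smul_def, map_smul, smul_eq_mul]

lemma pcomp_mul (a : PowerSeries R) (h : constantCoeff a = 0) (f g : PowerSeries R) :
    pcomp a (f * g) = pcomp a f * pcomp a g := by
  ext n
  rw [pcomp, coeff_mk]
  have step1 : PowerSeries.coeff n (Polynomial.aeval a (trunc (n + 1) (f * g))) =
      PowerSeries.coeff n (Polynomial.aeval a (trunc (n + 1) f * trunc (n + 1) g)) := by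
    refine coeff_aeval_congr a h (fun i hi => ?_)
    rw [coeff_trunc, if_pos (Nat.lt_succ_of_le hi), ← Polynomial.coeff_coe, Polynomial.coe_mul]
    exact PowerSeries.coeff_mul_eq_coeff_trunc_mul_trunc f g (Nat.lt_succ_of_le hi)
  rw [step1, map_mul, PowerSeries.coeff_mul, PowerSeries.coeff_mul]
  refine Finset.sum_congr rfl fun p hp => ?_
  obtain ⟨h1, h2⟩ : p.1 ≤ n ∧ p.2 ≤ n := by
    have := Finset.HasAntidiagonal.mem_antidiagonal.mp hp
    omega
  rw [coeff_pcomp_trunc a h f (Nat.lt_succ_of_le h1),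
    coeff_pcomp_trunc a h g (Nat.lt_succ_of_le h2)]

lemma pcomp_one (a : PowerSeries R) : pcomp a 1 = 1 := by
  ext n
  rw [pcomp, coeff_mk, trunc_one, map_one]

lemma pcomp_add (a f g : PowerSeries R) : pcomp a (f + g) = pcomp a f + pcomp a g := by
  ext n
  rw [pcomp, coeff_mk, map_add, map_add, map_add, map_add, pcomp, coeff_mk, pcomp, coeff_mk]

lemma pcomp_neg (a f : PowerSeries R) : pcomp a (-f) = -pcomp a f := by
  ext n
  have : trunc (n + 1) (-f) = -trunc (n + 1) f := by
    ext i
    simp only [coeff_trunc, map_neg, Polynomial.coeff_neg]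
  simp only [pcomp, coeff_mk, this, map_neg]

lemma pcomp_sub (a f g : PowerSeries R) : pcomp a (f - g) = pcomp a f - pcomp a g := by
  rw [sub_eq_add_neg, pcomp_add, pcomp_neg, sub_eq_add_neg]

lemma pcomp_pow (a : PowerSeries R) (h : constantCoeff a = 0) (f : PowerSeries R) (m : ℕ) :
    pcomp a (f ^ m) = pcomp a f ^ m := by
  induction m with
  | zero => simpa using pcomp_one a
  | succ m ih => rw [pow_succ, pcomp_mul a h, ih, pow_succ]

lemma pcomp_X (a : PowerSeries R) (h : constantCoeff a = 0) : pcomp a X = a := by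
  ext n
  rw [coeff_pcomp]
  rcases n with _ | n
  · simp [PowerSeries.coeff_zero_eq_constantCoeff, h]
  · rw [Finset.sum_eq_single 1]
    · simp
    · intro m hm hm1
      simp [PowerSeries.coeff_X, hm1]
    · intro hm
      simp at hm

section Stirling

variable (L : PowerSeries ℚ)
  (hL : ∀ n : ℕ, PowerSeries.coeff n L = if n = 0 then 0 else (-1 : ℚ) ^ (n - 1) / n)
  (S1 : ℕ → ℕ → ℚ)
  (hS1 : ∀ n : ℕ, descPochhammer ℚ n =
    ∑ l ∈ Finset.range (n + 1), Polynomial.C (S1 n l) * Polynomial.X ^ l)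
  (hS1zero : ∀ n l : ℕ, n < l → S1 n l = 0)

include hS1 hS1zero in
lemma coeff_desc : ∀ n m : ℕ, (descPochhammer ℚ n).coeff m = S1 n m := by
  intro n m
  rw [hS1 n, Polynomial.finset_sum_coeff]
  simp only [Polynomial.coeff_C_mul, Polynomial.coeff_X_pow, mul_ite, mul_one, mul_zero]
  rw [Finset.sum_ite_eq (Finset.range (n + 1)) m (S1 n)]
  by_cases hm : m ≤ n
  · rw [if_pos (Finset.mem_range.mpr (Nat.lt_succ_of_le hm))]
  · rw [if_neg (by simpa using hm), hS1zero n m (not_le.mp hm)]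

include hS1 hS1zero in
lemma S1rec (n m : ℕ) : S1 (n + 1) (m + 1) = S1 n m - n * S1 n (m + 1) := by
  rw [← coeff_desc S1 hS1 hS1zero, descPochhammer_succ_right, ← Polynomial.C_eq_natCast,
    mul_sub, Polynomial.coeff_sub, Polynomial.coeff_mul_X, Polynomial.coeff_mul_C,
    coeff_desc S1 hS1 hS1zero, coeff_desc S1 hS1 hS1zero]
  ring

include hL in
lemma constL : PowerSeries.constantCoeff L = 0 := by
  have := hL 0
  simpa using this

include hL in
lemma one_add_X_mul_dL : (1 + X) * (d⁄dX ℚ) L = 1 := by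
  ext n
  have hc : ∀ j : ℕ, PowerSeries.coeff j ((d⁄dX ℚ) L) = (-1 : ℚ) ^ j := by
    intro j
    rw [PowerSeries.coeff_derivative, hL (j + 1), if_neg (Nat.succ_ne_zero j)]
    have : ((j : ℚ) + 1) ≠ 0 := by positivity
    field_simp
    rw [Nat.add_sub_cancel]; push_cast; ring
  rw [add_mul, one_mul, map_add]
  rcases n with _ | n
  · rw [PowerSeries.coeff_zero_X_mul, hc 0, PowerSeries.coeff_one]
    norm_num
  · rw [PowerSeries.coeff_succ_X_mul, hc (n + 1), hc n, PowerSeries.coeff_one,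
      if_neg (Nat.succ_ne_zero n)]
    ring

include hL in
lemma Lrec (m n : ℕ) :
    ((n : ℚ) + 1) * PowerSeries.coeff (n + 1) (L ^ (m + 1)) +
      (n : ℚ) * PowerSeries.coeff n (L ^ (m + 1)) =
    ((m : ℚ) + 1) * PowerSeries.coeff n (L ^ m) := by
  have hd : (1 + X) * (d⁄dX ℚ) (L ^ (m + 1)) = (m + 1) • (L ^ m) := by
    rw [Derivation.leibniz_pow, Nat.add_sub_cancel]
    rw [mul_smul_comm, smul_eq_mul,
      show (1 + X) * (L ^ m * (d⁄dX ℚ) L) = L ^ m * ((1 + X) * (d⁄dX ℚ) L) by ring,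
      one_add_X_mul_dL L hL, mul_one]
  have := congrArg (PowerSeries.coeff n) hd
  rw [map_nsmul, nsmul_eq_mul, Nat.cast_add, Nat.cast_one, add_mul, one_mul, map_add] at this
  rcases n with _ | j
  · rw [PowerSeries.coeff_zero_X_mul] at this
    rw [PowerSeries.coeff_derivative] at this
    push_cast at this ⊢
    linarith [this]
  · rw [PowerSeries.coeff_succ_X_mul, PowerSeries.coeff_derivative,
      PowerSeries.coeff_derivative] at this
    push_cast at this ⊢
    linarith [this]

include hL hS1 hS1zero in
lemma Lcoeff : ∀ n m : ℕ, PowerSeries.coeff n (L ^ m) =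
    (m.factorial : ℚ) / n.factorial * S1 n m := by
  intro n
  induction n with
  | zero =>
    intro m
    rw [PowerSeries.coeff_zero_eq_constantCoeff, map_pow, constL L hL]
    rcases m with _ | m
    · have h00 : S1 0 0 = 1 := by
        rw [← coeff_desc S1 hS1 hS1zero, descPochhammer_zero, Polynomial.coeff_one]
        simp
      simp [h00]
    · rw [zero_pow (Nat.succ_ne_zero m), hS1zero 0 (m + 1) (Nat.succ_pos m)]
      ring
  | succ n ih =>
    intro m
    rcases m with _ | m
    · rw [pow_zero, PowerSeries.coeff_one, if_neg (Nat.succ_ne_zero n)]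
      have : S1 (n + 1) 0 = 0 := by
        rw [← coeff_desc S1 hS1 hS1zero, Polynomial.coeff_zero_eq_eval_zero,
          descPochhammer_eval_zero, if_neg (Nat.succ_ne_zero n)]
      rw [this]
      ring
    · have hrec := Lrec L hL m n
      rw [ih m, ih (m + 1), S1rec S1 hS1 hS1zero n m] at *
      have hn : ((n.factorial : ℚ)) ≠ 0 := Nat.cast_ne_zero.mpr (Nat.factorial_ne_zero n)
      have hn1 : (((n + 1).factorial : ℚ)) ≠ 0 := Nat.cast_ne_zero.mpr (Nat.factorial_ne_zero _)
      have hfact : (((n + 1).factorial : ℚ)) = ((n : ℚ) + 1) * n.factorial := by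
        rw [Nat.factorial_succ]; push_cast; ring
      have hmfact : (((m + 1).factorial : ℚ)) = ((m : ℚ) + 1) * m.factorial := by
        rw [Nat.factorial_succ]; push_cast; ring
      have hne : ((n : ℚ) + 1) ≠ 0 := by positivity
      field_simp [hfact, hmfact] at hrec ⊢
      rw [hmfact] at hrec; rw [hfact, hmfact]; linear_combination hrec

end Stirling

section InvLemma

noncomputable def Inv (s : ℕ) : PowerSeries ℚ :=
  PowerSeries.mk fun n => (-1 : ℚ) ^ n / n.factorial * (ascPochhammer ℚ n).eval (s : ℚ)

lemma Inv_succ_mul (s : ℕ) : Inv (s + 1) * (1 + X) = Inv s := by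
  ext n
  rw [mul_add, mul_one, map_add]
  rcases n with _ | n
  · rw [PowerSeries.coeff_zero_mul_X]
    simp [Inv]
  · rw [PowerSeries.coeff_succ_mul_X, Inv, Inv, coeff_mk, coeff_mk, coeff_mk]
    have e1 : (ascPochhammer ℚ (n + 1)).eval ((s : ℚ) + 1) =
        (ascPochhammer ℚ n).eval ((s : ℚ) + 1) * ((s : ℚ) + 1 + n) := by
      rw [ascPochhammer_succ_right, Polynomial.eval_mul, Polynomial.eval_add, Polynomial.eval_X,
        Polynomial.eval_natCast]
    have e2 : (ascPochhammer ℚ (n + 1)).eval (s : ℚ) =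
        (s : ℚ) * (ascPochhammer ℚ n).eval ((s : ℚ) + 1) := by
      rw [ascPochhammer_succ_left, Polynomial.eval_mul, Polynomial.eval_X, Polynomial.eval_comp,
        Polynomial.eval_add, Polynomial.eval_X, Polynomial.eval_one]
    push_cast
    rw [e1, e2]
    have hn : ((n.factorial : ℚ)) ≠ 0 := Nat.cast_ne_zero.mpr (Nat.factorial_ne_zero n)
    have hfact : (((n + 1).factorial : ℚ)) = ((n : ℚ) + 1) * n.factorial := by
      rw [Nat.factorial_succ]; push_cast; ring
    have hne : ((n : ℚ) + 1) ≠ 0 := by positivity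
    field_simp [hfact, pow_succ]
    rw [hfact]; ring

lemma Inv_mul_pow (s : ℕ) : Inv s * (1 + X) ^ s = 1 := by
  induction s with
  | zero =>
    rw [pow_zero, mul_one]
    ext n
    rcases n with _ | n
    · simp [Inv]
    · simp [Inv, PowerSeries.coeff_one, ascPochhammer_eval_zero]
  | succ s ih =>
    rw [pow_succ', ← mul_assoc, Inv_succ_mul s, ih]

end InvLemma

section DescNeg

variable (S1 : ℕ → ℕ → ℚ)
  (hS1 : ∀ n : ℕ, descPochhammer ℚ n =
    ∑ l ∈ Finset.range (n + 1), Polynomial.C (S1 n l) * Polynomial.X ^ l)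

include hS1 in
lemma descneg (n : ℕ) :
    ∑ m ∈ Finset.range (n + 1), Polynomial.C (S1 n m) * (-Polynomial.X : Polynomial ℚ) ^ m =
      Polynomial.C ((-1 : ℚ) ^ n) * ascPochhammer ℚ n := by
  apply Polynomial.funext
  intro x
  have hsq : (-1 : ℚ) ^ n * (-1) ^ n = 1 := by
    rw [← pow_add, ← two_mul, pow_mul]
    norm_num
  have h := ascPochhammer_eval_neg_eq_descPochhammer (R := ℚ) (-x) n
  rw [neg_neg] at h
  have hd : (descPochhammer ℚ n).eval (-x) = ∑ m ∈ Finset.range (n + 1), S1 n m * (-x) ^ m := by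
    rw [hS1, Polynomial.eval_finset_sum]
    simp
  simp only [Polynomial.eval_finset_sum, Polynomial.eval_mul, Polynomial.eval_C,
    Polynomial.eval_pow, Polynomial.eval_neg, Polynomial.eval_X]
  rw [← hd, h, ← mul_assoc, hsq, one_mul]

include hS1 in
lemma desc_eval_neg_one (n : ℕ) :
    ∑ m ∈ Finset.range (n + 1), S1 n m * (-1 : ℚ) ^ m = (-1 : ℚ) ^ n * n.factorial := by
  have := congrArg (Polynomial.eval (1 : ℚ)) (descneg S1 hS1 n)
  simpa [Polynomial.eval_finset_sum, ascPochhammer_eval_one] using this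

end DescNeg

section Comp

variable (L : PowerSeries ℚ)
  (hL : ∀ n : ℕ, PowerSeries.coeff n L = if n = 0 then 0 else (-1 : ℚ) ^ (n - 1) / n)
  (S1 : ℕ → ℕ → ℚ)
  (hS1 : ∀ n : ℕ, descPochhammer ℚ n =
    ∑ l ∈ Finset.range (n + 1), Polynomial.C (S1 n l) * Polynomial.X ^ l)
  (hS1zero : ∀ n l : ℕ, n < l → S1 n l = 0)

noncomputable def aL (L : PowerSeries ℚ) : PowerSeries (Polynomial ℚ) :=
  -(PowerSeries.map (Polynomial.C : ℚ →+* Polynomial ℚ) L)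

include hL in
lemma constA : PowerSeries.constantCoeff (aL L) = 0 := by
  rw [aL, map_neg, neg_eq_zero, ← PowerSeries.coeff_zero_eq_constantCoeff,
    PowerSeries.coeff_map, show (PowerSeries.coeff 0) L = 0 by simpa using hL 0, map_zero]

include hL hS1 hS1zero in
lemma coeff_aL_pow (n m : ℕ) :
    PowerSeries.coeff n (aL L ^ m) =
      Polynomial.C ((-1 : ℚ) ^ m * ((m.factorial : ℚ) / n.factorial) * S1 n m) := by
  rw [aL, neg_pow, ← map_pow, show ((-1 : PowerSeries (Polynomial ℚ)) ^ m) =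
      PowerSeries.C ((-1 : Polynomial ℚ) ^ m) by rw [map_pow, map_neg, map_one],
    PowerSeries.coeff_C_mul, PowerSeries.coeff_map, Lcoeff L hL S1 hS1 hS1zero n m,
    show ((-1 : Polynomial ℚ) ^ m) = Polynomial.C ((-1 : ℚ) ^ m) by
      rw [map_pow, map_neg, map_one], ← map_mul]
  congr 1
  ring

include hL hS1 hS1zero in
lemma pcompEXP :
    pcomp (aL L) (PowerSeries.mk fun n => ((n.factorial : ℚ)⁻¹) • (Polynomial.X : Polynomial ℚ) ^ n) =
      PowerSeries.mk (fun n => ((-1 : ℚ) ^ n / n.factorial) • ascPochhammer ℚ n) := by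
  refine PowerSeries.ext fun n => ?_
  rw [coeff_pcomp, coeff_mk]
  apply Polynomial.funext
  intro y
  simp only [coeff_mk, coeff_aL_pow L hL S1 hS1 hS1zero, Polynomial.eval_finset_sum,
    Polynomial.eval_mul, Polynomial.eval_smul, Polynomial.eval_pow, Polynomial.eval_C,
    Polynomial.eval_X, smul_eq_mul]
  have h := ascPochhammer_eval_neg_eq_descPochhammer (R := ℚ) (-y) n
  rw [neg_neg] at h
  have hd : (descPochhammer ℚ n).eval (-y) =
      ∑ m ∈ Finset.range (n + 1), S1 n m * (-y) ^ m := by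
    rw [hS1, Polynomial.eval_finset_sum]
    simp
  rw [h, hd, Finset.mul_sum, Finset.mul_sum]
  refine Finset.sum_congr rfl fun m _ => ?_
  have hm : ((m.factorial : ℚ)) ≠ 0 := Nat.cast_ne_zero.mpr (Nat.factorial_ne_zero m)
  have hn : ((n.factorial : ℚ)) ≠ 0 := Nat.cast_ne_zero.mpr (Nat.factorial_ne_zero n)
  have hsq : (-1 : ℚ) ^ n * (-1) ^ n = 1 := by
    rw [← pow_add, ← two_mul, pow_mul]; norm_num
  rw [neg_pow]
  field_simp
  ring_nf
  rw [show ((-1 : ℚ)) ^ (n * 2) = 1 from Even.neg_one_pow ⟨n, by ring⟩, mul_one]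


include hL hS1 hS1zero in
lemma coeff_pcomp_exp (j : ℕ) :
    PowerSeries.coeff j
        (pcomp (aL L) (PowerSeries.map (Polynomial.C : ℚ →+* Polynomial ℚ) (PowerSeries.exp ℚ))) =
      Polynomial.C ((-1 : ℚ) ^ j) := by
  rw [coeff_pcomp]
  have step : ∀ m ∈ Finset.range (j + 1),
      PowerSeries.coeff m
          (PowerSeries.map (Polynomial.C : ℚ →+* Polynomial ℚ) (PowerSeries.exp ℚ)) *
        PowerSeries.coeff j (aL L ^ m) =
      Polynomial.C ((1 / m.factorial : ℚ) *
        ((-1 : ℚ) ^ m * ((m.factorial : ℚ) / j.factorial) * S1 j m)) := by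
    intro m _
    rw [PowerSeries.coeff_map, PowerSeries.coeff_exp, coeff_aL_pow L hL S1 hS1 hS1zero, ← map_mul]
    norm_num
  rw [Finset.sum_congr rfl step, ← map_sum]
  congr 1
  have key := desc_eval_neg_one S1 hS1 j
  have hj : ((j.factorial : ℚ)) ≠ 0 := Nat.cast_ne_zero.mpr (Nat.factorial_ne_zero j)
  have step2 : ∀ m ∈ Finset.range (j + 1),
      (1 / m.factorial : ℚ) * ((-1 : ℚ) ^ m * ((m.factorial : ℚ) / j.factorial) * S1 j m) =
        (j.factorial : ℚ)⁻¹ * (S1 j m * (-1 : ℚ) ^ m) := by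
    intro m _
    have hm : ((m.factorial : ℚ)) ≠ 0 := Nat.cast_ne_zero.mpr (Nat.factorial_ne_zero m)
    field_simp
  rw [Finset.sum_congr rfl step2, ← Finset.mul_sum, key]
  have hsq : (-1 : ℚ) ^ j * (-1) ^ j = 1 := by
    rw [← pow_add, ← two_mul, pow_mul]; norm_num
  field_simp

include hL hS1 hS1zero in
lemma aux_P1 :
    (pcomp (aL L) (PowerSeries.map (Polynomial.C : ℚ →+* Polynomial ℚ) (PowerSeries.exp ℚ)) - 1) *
      (1 + X) = -X := by
  refine PowerSeries.ext fun n => ?_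
  rw [mul_add, mul_one, map_add, map_sub, map_neg]
  rcases n with _ | n
  · rw [PowerSeries.coeff_zero_mul_X, coeff_pcomp_exp L hL S1 hS1 hS1zero 0]
    simp
  · rw [PowerSeries.coeff_succ_mul_X, map_sub, coeff_pcomp_exp L hL S1 hS1 hS1zero,
      coeff_pcomp_exp L hL S1 hS1 hS1zero, PowerSeries.coeff_one, PowerSeries.coeff_one,
      PowerSeries.coeff_X, pow_succ]
    rcases n with _ | n <;> simp

include hL hS1 hS1zero in
lemma pcompEu (Lu : (PowerSeries ℚ)ˣ) (hLu : (Lu : PowerSeries ℚ) * PowerSeries.X = L)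
    (Eu : (PowerSeries ℚ)ˣ) (hEu : (Eu : PowerSeries ℚ) * PowerSeries.X = PowerSeries.exp ℚ - 1) :
    pcomp (aL L) (PowerSeries.map (Polynomial.C : ℚ →+* Polynomial ℚ) (Eu : PowerSeries ℚ)) *
      (PowerSeries.map (Polynomial.C : ℚ →+* Polynomial ℚ) (Lu : PowerSeries ℚ) * (1 + X)) = 1 := by
  set σ := PowerSeries.map (Polynomial.C : ℚ →+* Polynomial ℚ)
  set a := aL L with ha_def
  have ha := constA L hL
  have hmap : σ (Eu : PowerSeries ℚ) * X = σ (PowerSeries.exp ℚ) - 1 := by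
    rw [show (X : PowerSeries (Polynomial ℚ)) = σ X from (PowerSeries.map_X _).symm, ← map_mul,
      hEu, map_sub, map_one]
  have h2 := congrArg (pcomp a) hmap
  rw [pcomp_mul a ha, pcomp_X a ha, pcomp_sub, pcomp_one] at h2
  have hmapLu : σ (Lu : PowerSeries ℚ) * X = σ L := by
    rw [show (X : PowerSeries (Polynomial ℚ)) = σ X from (PowerSeries.map_X _).symm, ← map_mul,
      hLu]
  have ha' : a = -(σ (Lu : PowerSeries ℚ) * X) := by rw [hmapLu]; rfl
  have h3 := aux_P1 L hL S1 hS1 hS1zero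
  have h4 : (pcomp a (σ (Eu : PowerSeries ℚ)) *
      (σ (Lu : PowerSeries ℚ) * (1 + X))) * X = 1 * X := by
    calc pcomp a (σ (Eu : PowerSeries ℚ)) * (σ (Lu : PowerSeries ℚ) * (1 + X)) * X
        = -(pcomp a (σ (Eu : PowerSeries ℚ)) * a * (1 + X)) := by rw [ha']; ring
      _ = -((pcomp a (σ (PowerSeries.exp ℚ)) - 1) * (1 + X)) := by rw [h2]
      _ = 1 * X := by rw [h3]; ring
  exact mul_right_cancel₀ PowerSeries.X_ne_zero h4

include hL hS1 hS1zero in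
lemma pcompEuInv (Lu : (PowerSeries ℚ)ˣ) (hLu : (Lu : PowerSeries ℚ) * PowerSeries.X = L)
    (Eu : (PowerSeries ℚ)ˣ) (hEu : (Eu : PowerSeries ℚ) * PowerSeries.X = PowerSeries.exp ℚ - 1) :
    pcomp (aL L) (PowerSeries.map (Polynomial.C : ℚ →+* Polynomial ℚ) ((Eu⁻¹ : (PowerSeries ℚ)ˣ) : PowerSeries ℚ)) =
      PowerSeries.map (Polynomial.C : ℚ →+* Polynomial ℚ) (Lu : PowerSeries ℚ) * (1 + X) := by
  set σ := PowerSeries.map (Polynomial.C : ℚ →+* Polynomial ℚ)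
  set a := aL L
  have ha := constA L hL
  have h1 : pcomp a (σ ((Eu⁻¹ : (PowerSeries ℚ)ˣ) : PowerSeries ℚ)) *
      pcomp a (σ (Eu : PowerSeries ℚ)) = 1 := by
    rw [← pcomp_mul a ha, ← map_mul, Units.inv_mul, map_one, pcomp_one]
  calc pcomp a (σ ((Eu⁻¹ : (PowerSeries ℚ)ˣ) : PowerSeries ℚ))
      = pcomp a (σ ((Eu⁻¹ : (PowerSeries ℚ)ˣ) : PowerSeries ℚ)) *
        (pcomp a (σ (Eu : PowerSeries ℚ)) * (σ (Lu : PowerSeries ℚ) * (1 + X))) := by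
        rw [pcompEu L hL S1 hS1 hS1zero Lu hLu Eu hEu, mul_one]
    _ = (pcomp a (σ ((Eu⁻¹ : (PowerSeries ℚ)ˣ) : PowerSeries ℚ)) *
        pcomp a (σ (Eu : PowerSeries ℚ))) * (σ (Lu : PowerSeries ℚ) * (1 + X)) := by ring
    _ = σ (Lu : PowerSeries ℚ) * (1 + X) := by rw [h1, one_mul]

end Comp

lemma smul_mul_C (c d : ℚ) (p : Polynomial ℚ) : (c • p) * Polynomial.C d = (c * d) • p := by
  rw [Polynomial.smul_eq_C_mul, Polynomial.smul_eq_C_mul, map_mul]; ring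

lemma C_mul_smul (c d : ℚ) (p : Polynomial ℚ) : Polynomial.C c * (d • p) = (c * d) • p := by
  rw [Polynomial.smul_eq_C_mul, Polynomial.smul_eq_C_mul, map_mul]; ring

lemma map_ev_map_C (x : ℚ) (f : PowerSeries ℚ) :
    PowerSeries.map (Polynomial.evalRingHom x)
      (PowerSeries.map (Polynomial.C : ℚ →+* Polynomial ℚ) f) = f := by
  ext n
  rw [PowerSeries.coeff_map, PowerSeries.coeff_map]
  simp

end CS10

/-- for all `n ≥ 0`, `s ≥ 0` and integers `r, k`,
`Aₙ^{(r,k)}(x) = Σ_{m=0}^n [(-1)^m Σ_{l=0}^{n-m} C(n,l) S₁(n-l,m) A_l^{(r+s,k)}(s)]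
 B_m^{(s)}(x)`, where `B_m^{(s)}` is the Bernoulli polynomial of order `s`. -/
theorem cauchy_stmt10
    (r k : ℤ) (s : ℕ)
    (L : PowerSeries ℚ)
    (hL : ∀ n : ℕ, PowerSeries.coeff n L = if n = 0 then 0 else (-1 : ℚ) ^ (n - 1) / n)
    (Lu : (PowerSeries ℚ)ˣ)
    (hLu : (Lu : PowerSeries ℚ) * PowerSeries.X = L)
    (G : ℤ → PowerSeries ℚ)
    (hG : ∀ (j : ℤ) (n : ℕ), PowerSeries.coeff n (G j) =
      ∑ m ∈ Finset.range (n + 1),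
        ((m.factorial : ℚ) * ((m : ℚ) + 1) ^ j)⁻¹ * PowerSeries.coeff n (L ^ m))
    (A : ℤ → ℤ → ℕ → Polynomial ℚ)
    (hA : ∀ ρ κ : ℤ, PowerSeries.map (Polynomial.C : ℚ →+* Polynomial ℚ)
        (((Lu ^ (-ρ) : (PowerSeries ℚ)ˣ) : PowerSeries ℚ) * G κ) *
        PowerSeries.mk (fun n => ((-1 : ℚ) ^ n / n.factorial) • ascPochhammer ℚ n) =
      PowerSeries.mk (fun n => ((n.factorial : ℚ)⁻¹) • A ρ κ n))
    (S1 : ℕ → ℕ → ℚ)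
    (hS1 : ∀ n : ℕ, descPochhammer ℚ n =
      ∑ l ∈ Finset.range (n + 1), Polynomial.C (S1 n l) * Polynomial.X ^ l)
    (hS1zero : ∀ n l : ℕ, n < l → S1 n l = 0)
    (Eu : (PowerSeries ℚ)ˣ)
    (hEu : (Eu : PowerSeries ℚ) * PowerSeries.X = PowerSeries.exp ℚ - 1)
    (B : ℤ → ℕ → Polynomial ℚ)
    (hB : ∀ α : ℤ, PowerSeries.map (Polynomial.C : ℚ →+* Polynomial ℚ)
        ((Eu ^ (-α) : (PowerSeries ℚ)ˣ) : PowerSeries ℚ) *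
        PowerSeries.mk (fun n => ((n.factorial : ℚ)⁻¹) • (Polynomial.X : Polynomial ℚ) ^ n) =
      PowerSeries.mk (fun n => ((n.factorial : ℚ)⁻¹) • B α n))
    :
    ∀ n : ℕ, A r k n = ∑ m ∈ Finset.range (n + 1),
      ((-1 : ℚ) ^ m * ∑ l ∈ Finset.range (n - m + 1),
        (n.choose l : ℚ) * S1 (n - l) m * (A ((r : ℤ) + s) k l).eval (s : ℚ)) •
          B (s : ℤ) m := by
  classical
  intro n
  have ha : PowerSeries.constantCoeff (CS10.aL L) = 0 := CS10.constA L hL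
  -- (1) evaluated A-series
  have hAev : (((Lu ^ (-(r + (s : ℤ))) : (PowerSeries ℚ)ˣ) : PowerSeries ℚ) * G k) * CS10.Inv s
      = PowerSeries.mk fun l => ((l.factorial : ℚ)⁻¹) * (A (r + (s : ℤ)) k l).eval (s : ℚ) := by
    have h0 := congrArg (PowerSeries.map (Polynomial.evalRingHom ((s : ℕ) : ℚ)))
      (hA (r + (s : ℤ)) k)
    rw [map_mul, CS10.map_ev_map_C] at h0
    have e1 : PowerSeries.map (Polynomial.evalRingHom ((s : ℕ) : ℚ))
        (PowerSeries.mk (fun n => ((-1 : ℚ) ^ n / n.factorial) • ascPochhammer ℚ n))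
        = CS10.Inv s := by
      ext j
      rw [PowerSeries.coeff_map, PowerSeries.coeff_mk, CS10.Inv, PowerSeries.coeff_mk]
      simp
    have e2 : PowerSeries.map (Polynomial.evalRingHom ((s : ℕ) : ℚ))
        (PowerSeries.mk (fun n => ((n.factorial : ℚ)⁻¹) • A (r + (s : ℤ)) k n))
        = PowerSeries.mk fun l => ((l.factorial : ℚ)⁻¹) * (A (r + (s : ℤ)) k l).eval (s : ℚ) := by
      ext j
      rw [PowerSeries.coeff_map, PowerSeries.coeff_mk, PowerSeries.coeff_mk]
      simp
    rw [e1, e2] at h0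
    exact h0
    -- (2) composition of the Bernoulli generating function
  have hEuInv : ((Eu ^ (-(s : ℤ)) : (PowerSeries ℚ)ˣ) : PowerSeries ℚ)
      = (((Eu⁻¹ : (PowerSeries ℚ)ˣ) : PowerSeries ℚ)) ^ s := by
    rw [zpow_neg, ← inv_zpow, zpow_natCast, Units.val_pow_eq_pow_val]
  have hpc : CS10.pcomp (CS10.aL L)
      (PowerSeries.map (Polynomial.C : ℚ →+* Polynomial ℚ)
          ((Eu ^ (-(s : ℤ)) : (PowerSeries ℚ)ˣ) : PowerSeries ℚ) *
        PowerSeries.mk (fun n => ((n.factorial : ℚ)⁻¹) • (Polynomial.X : Polynomial ℚ) ^ n))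
      = (PowerSeries.map (Polynomial.C : ℚ →+* Polynomial ℚ) (Lu : PowerSeries ℚ) * (1 + X)) ^ s *
        PowerSeries.mk (fun n => ((-1 : ℚ) ^ n / n.factorial) • ascPochhammer ℚ n) := by
    rw [CS10.pcomp_mul _ ha, hEuInv, map_pow, CS10.pcomp_pow _ ha,
      CS10.pcompEuInv L hL S1 hS1 hS1zero Lu hLu Eu hEu,
      CS10.pcompEXP L hL S1 hS1 hS1zero]
  -- (3) unit arithmetic at the ℚ-level
  have hq : (((Lu ^ (-(r + (s : ℤ))) : (PowerSeries ℚ)ˣ) : PowerSeries ℚ) * G k * CS10.Inv s) *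
      ((Lu : PowerSeries ℚ) * (1 + X)) ^ s
      = ((Lu ^ (-r) : (PowerSeries ℚ)ˣ) : PowerSeries ℚ) * G k := by
    have hunits : ((Lu ^ (-(r + (s : ℤ))) : (PowerSeries ℚ)ˣ) : PowerSeries ℚ) *
        ((Lu ^ s : (PowerSeries ℚ)ˣ) : PowerSeries ℚ)
        = ((Lu ^ (-r) : (PowerSeries ℚ)ˣ) : PowerSeries ℚ) := by
      rw [← Units.val_mul]
      congr 1
      rw [← zpow_natCast Lu s, ← zpow_add]
      congr 1
      ring
    have hL1 : ((Lu : PowerSeries ℚ)) ^ s = ((Lu ^ s : (PowerSeries ℚ)ˣ) : PowerSeries ℚ) :=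
      (Units.val_pow_eq_pow_val _ _).symm
    calc (((Lu ^ (-(r + (s : ℤ))) : (PowerSeries ℚ)ˣ) : PowerSeries ℚ) * G k * CS10.Inv s) *
        ((Lu : PowerSeries ℚ) * (1 + X)) ^ s
        = (((Lu ^ (-(r + (s : ℤ))) : (PowerSeries ℚ)ˣ) : PowerSeries ℚ) *
            ((Lu ^ s : (PowerSeries ℚ)ˣ) : PowerSeries ℚ)) * G k *
            (CS10.Inv s * (1 + X) ^ s) := by rw [mul_pow, hL1]; ring
      _ = ((Lu ^ (-r) : (PowerSeries ℚ)ˣ) : PowerSeries ℚ) * G k := by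
          rw [hunits, CS10.Inv_mul_pow s, mul_one]
  -- (4) main power-series identity
  have h1X : (PowerSeries.map (Polynomial.C : ℚ →+* Polynomial ℚ) (Lu : PowerSeries ℚ) *
      (1 + X)) ^ s = PowerSeries.map (Polynomial.C : ℚ →+* Polynomial ℚ)
        (((Lu : PowerSeries ℚ) * (1 + X)) ^ s) := by
    rw [map_pow, map_mul, map_add, map_one, PowerSeries.map_X]
  have key : PowerSeries.map (Polynomial.C : ℚ →+* Polynomial ℚ)
        (((Lu ^ (-r) : (PowerSeries ℚ)ˣ) : PowerSeries ℚ) * G k) *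
      PowerSeries.mk (fun n => ((-1 : ℚ) ^ n / n.factorial) • ascPochhammer ℚ n)
      = PowerSeries.map (Polynomial.C : ℚ →+* Polynomial ℚ)
          ((((Lu ^ (-(r + (s : ℤ))) : (PowerSeries ℚ)ˣ) : PowerSeries ℚ) * G k) * CS10.Inv s) *
        CS10.pcomp (CS10.aL L)
          (PowerSeries.map (Polynomial.C : ℚ →+* Polynomial ℚ)
              ((Eu ^ (-(s : ℤ)) : (PowerSeries ℚ)ˣ) : PowerSeries ℚ) *
            PowerSeries.mk (fun n => ((n.factorial : ℚ)⁻¹) • (Polynomial.X : Polynomial ℚ) ^ n)) := by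
    rw [hpc, h1X, ← mul_assoc, ← map_mul, hq]
  -- (5) assemble
  have hmk : PowerSeries.mk (fun n => ((n.factorial : ℚ)⁻¹) • A r k n)
      = PowerSeries.map (Polynomial.C : ℚ →+* Polynomial ℚ)
          (PowerSeries.mk fun l => ((l.factorial : ℚ)⁻¹) * (A (r + (s : ℤ)) k l).eval (s : ℚ)) *
        CS10.pcomp (CS10.aL L)
          (PowerSeries.mk (fun n => ((n.factorial : ℚ)⁻¹) • B (s : ℤ) n)) := by
    rw [← hA r k, key, hAev, hB (s : ℤ)]
  -- (6) coefficient of the composed Bernoulli series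
  have hQQ : ∀ j : ℕ, PowerSeries.coeff j
      (CS10.pcomp (CS10.aL L) (PowerSeries.mk (fun n => ((n.factorial : ℚ)⁻¹) • B (s : ℤ) n)))
      = ∑ m ∈ Finset.range (j + 1),
          ((-1 : ℚ) ^ m * S1 j m / j.factorial) • B (s : ℤ) m := by
    intro j
    rw [CS10.coeff_pcomp]
    refine Finset.sum_congr rfl fun m _ => ?_
    rw [PowerSeries.coeff_mk, CS10.coeff_aL_pow L hL S1 hS1 hS1zero j m, CS10.smul_mul_C]
    congr 1
    have hm : ((m.factorial : ℚ)) ≠ 0 := Nat.cast_ne_zero.mpr (Nat.factorial_ne_zero m)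
    field_simp
  have hQQ' : ∀ j : ℕ, j ≤ n → PowerSeries.coeff j
      (CS10.pcomp (CS10.aL L) (PowerSeries.mk (fun n => ((n.factorial : ℚ)⁻¹) • B (s : ℤ) n)))
      = ∑ m ∈ Finset.range (n + 1),
          ((-1 : ℚ) ^ m * S1 j m / j.factorial) • B (s : ℤ) m := by
    intro j hj
    rw [hQQ j]
    refine Finset.sum_subset (fun x hx => ?_) (fun m hm hnm => ?_)
    · simp only [Finset.mem_range] at hx ⊢
      omega
    · simp only [Finset.mem_range] at hm hnm
      rw [hS1zero j m (by omega)]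
      simp
  -- (7) extract coefficient n
  have hcoeff := congrArg (PowerSeries.coeff n) hmk
  rw [PowerSeries.coeff_mk, PowerSeries.coeff_mul,
    Finset.Nat.sum_antidiagonal_eq_sum_range_succ_mk] at hcoeff
  have houter : ∀ l ∈ Finset.range (n + 1),
      PowerSeries.coeff l (PowerSeries.map (Polynomial.C : ℚ →+* Polynomial ℚ)
          (PowerSeries.mk fun l => ((l.factorial : ℚ)⁻¹) * (A (r + (s : ℤ)) k l).eval (s : ℚ))) *
        PowerSeries.coeff (n - l)
          (CS10.pcomp (CS10.aL L) (PowerSeries.mk (fun n => ((n.factorial : ℚ)⁻¹) • B (s : ℤ) n)))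
      = ∑ m ∈ Finset.range (n + 1),
          ((((l.factorial : ℚ)⁻¹) * (A (r + (s : ℤ)) k l).eval (s : ℚ)) *
            ((-1 : ℚ) ^ m * S1 (n - l) m / (n - l).factorial)) • B (s : ℤ) m := by
    intro l hl
    simp only [Finset.mem_range] at hl
    rw [PowerSeries.coeff_map, PowerSeries.coeff_mk, hQQ' (n - l) (by omega), Finset.mul_sum]
    refine Finset.sum_congr rfl fun m _ => ?_
    rw [CS10.C_mul_smul]
  rw [Finset.sum_congr rfl houter, Finset.sum_comm] at hcoeff
  have hfn : ((n.factorial : ℚ)) ≠ 0 := Nat.cast_ne_zero.mpr (Nat.factorial_ne_zero n)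
  have hA' : A r k n = (n.factorial : ℚ) • (((n.factorial : ℚ)⁻¹) • A r k n) := by
    rw [smul_smul, mul_inv_cancel₀ hfn, one_smul]
  rw [hA', hcoeff, Finset.smul_sum]
  refine Finset.sum_congr rfl fun m hm => ?_
  simp only [Finset.mem_range] at hm
  rw [Finset.smul_sum]
  have hstep : ∀ l ∈ Finset.range (n + 1),
      (n.factorial : ℚ) • (((((l.factorial : ℚ)⁻¹) * (A (r + (s : ℤ)) k l).eval (s : ℚ)) *
          ((-1 : ℚ) ^ m * S1 (n - l) m / (n - l).factorial)) • B (s : ℤ) m)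
      = ((n.factorial : ℚ) * ((((l.factorial : ℚ)⁻¹) * (A (r + (s : ℤ)) k l).eval (s : ℚ)) *
          ((-1 : ℚ) ^ m * S1 (n - l) m / (n - l).factorial))) • B (s : ℤ) m :=
    fun l _ => smul_smul _ _ _
  rw [Finset.sum_congr rfl hstep, ← Finset.sum_smul]
  congr 1
  have hrestrict : ∑ l ∈ Finset.range (n - m + 1),
      ((n.factorial : ℚ) * ((((l.factorial : ℚ)⁻¹) * (A (r + (s : ℤ)) k l).eval (s : ℚ)) *
        ((-1 : ℚ) ^ m * S1 (n - l) m / (n - l).factorial)))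
      = ∑ l ∈ Finset.range (n + 1),
      ((n.factorial : ℚ) * ((((l.factorial : ℚ)⁻¹) * (A (r + (s : ℤ)) k l).eval (s : ℚ)) *
        ((-1 : ℚ) ^ m * S1 (n - l) m / (n - l).factorial))) := by
    refine Finset.sum_subset (fun x hx => ?_) (fun l hl hnl => ?_)
    · simp only [Finset.mem_range] at hx ⊢
      omega
    · simp only [Finset.mem_range] at hl hnl
      rw [hS1zero (n - l) m (by omega)]
      ring
  rw [← hrestrict, Finset.mul_sum]
  refine Finset.sum_congr rfl fun l hl => ?_
  simp only [Finset.mem_range] at hl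
  have hln : l ≤ n := by omega
  have hchoose := Nat.cast_choose ℚ hln
  have hfl : ((l.factorial : ℚ)) ≠ 0 := Nat.cast_ne_zero.mpr (Nat.factorial_ne_zero l)
  have hfnl : (((n - l).factorial : ℚ)) ≠ 0 := Nat.cast_ne_zero.mpr (Nat.factorial_ne_zero _)
  rw [hchoose]
  field_simp
end
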